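/- arXiv:2510.16006 — 2 statements merged into one kernel-verified Lean document; each statement's English description precedes it below -/
import Mathlib

section
/- If S is an aperiodic automorphism of a standard probability space, then Rec(S) contains a dense G_δ subset of Ext(S); in particular recurrence is a typical (Baire-generic) property of extensions of S. -/
open MeasureTheory Set

/-- A measure-preserving automorphism of `(X, μ)`. -/
structure Aut (X : Type*) [MeasurableSpace X] (μ : Measure X) where
  toEquiv : X ≃ᵐ X
  mp : MeasurePreserving toEquiv μ μ

namespace Aut

variable {X : Type*} [MeasurableSpace X] {μ : Measure X}

/-- The identity automorphism. -/
def id (μ : Measure X) : Aut X μ := ⟨MeasurableEquiv.refl X, MeasurePreserving.id μ⟩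

/-- Composition of automorphisms: `(a.comp b) x = a (b x)`. -/
def comp (a b : Aut X μ) : Aut X μ :=
  ⟨b.toEquiv.trans a.toEquiv, a.mp.comp b.mp⟩

/-- Inverse automorphism. -/
def inv (a : Aut X μ) : Aut X μ := ⟨a.toEquiv.symm, a.mp.symm a.toEquiv⟩

end Aut

/-- The Halmos (pseudo)metric on `Aut X μ` associated with a fixed family `A`
of measurable sets (dense in the measure algebra):
`ρ(S,T) = Σ_i 2^{-i} (μ(S A_i Δ T A_i) + μ(S⁻¹ A_i Δ T⁻¹ A_i))`. -/
noncomputable def halmos {X : Type*} [MeasurableSpace X] {μ : Measure X}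
    (A : ℕ → Set X) (S T : Aut X μ) : ℝ :=
  ∑' i : ℕ, (1 / 2 : ℝ) ^ i *
    ((μ (symmDiff (S.toEquiv '' A i) (T.toEquiv '' A i))).toReal +
     (μ (symmDiff (S.toEquiv.symm '' A i) (T.toEquiv.symm '' A i))).toReal)

/-- A skew product over `S`: an automorphism `R` of the product space together with
a measurable family of fiber automorphisms `T x` such that `R(x,y) = (Sx, T_x y)`. -/
structure SkewExt {X : Type*} [MeasurableSpace X] {μ : Measure X} (S : Aut X μ) where
  T : X → Aut X μ
  prod : Aut (X × X) (μ.prod μ)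
  spec : ∀ p : X × X, prod.toEquiv p = (S.toEquiv p.1, (T p.1).toEquiv p.2)

/-- `R ∈ Ext(S)`: `R` is a skew product over `S` for some measurable family of fibers. -/
def IsSkewProduct {X : Type*} [MeasurableSpace X] {μ : Measure X}
    (S : Aut X μ) (R : Aut (X × X) (μ.prod μ)) : Prop :=
  ∃ T : X → Aut X μ, ∀ p : X × X, R.toEquiv p = (S.toEquiv p.1, (T p.1).toEquiv p.2)

/-- The `n`-step cocycle `C(x,n,R) = T_{S^{n-1}x} ∘ ⋯ ∘ T_{Sx} ∘ T_x`. -/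
noncomputable def cocycle {X : Type*} [MeasurableSpace X] {μ : Measure X}
    (S : Aut X μ) (T : X → Aut X μ) (x : X) : ℕ → Aut X μ
  | 0 => Aut.id μ
  | n + 1 => (T (S.toEquiv^[n] x)).comp (cocycle S T x n)

/-- Openness of a set with respect to a (pseudo)metric `d`. -/
def IsOpenWrt {Z : Type*} (d : Z → Z → ℝ) (U : Set Z) : Prop :=
  ∀ z ∈ U, ∃ ε > (0 : ℝ), ∀ w, d z w < ε → w ∈ U

/-- `D` is a `G_δ` set with respect to the (pseudo)metric `d`. -/
def IsGdeltaWrt {Z : Type*} (d : Z → Z → ℝ) (D : Set Z) : Prop :=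
  ∃ U : ℕ → Set Z, (∀ k, IsOpenWrt d (U k)) ∧ D = ⋂ k, U k

/-- `D` is dense with respect to the (pseudo)metric `d`. -/
def IsDenseWrt {Z : Type*} (d : Z → Z → ℝ) (D : Set Z) : Prop :=
  ∀ z : Z, ∀ ε > (0 : ℝ), ∃ w ∈ D, d z w < ε

/-- `S` is aperiodic: for every `n ≥ 1` the set of `n`-periodic points is null. -/
def Aperiodic {X : Type*} [MeasurableSpace X] {μ : Measure X} (S : Aut X μ) : Prop :=
  ∀ n : ℕ, 1 ≤ n → μ {x : X | S.toEquiv^[n] x = x} = 0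

/-- The trivial extension `S × Id`. -/
def prodId {X : Type*} [MeasurableSpace X] {μ : Measure X} [SFinite μ] (S : Aut X μ) :
    Aut (X × X) (μ.prod μ) :=
  ⟨S.toEquiv.prodCongr (MeasurableEquiv.refl X), S.mp.prod (MeasurePreserving.id μ)⟩

/-- Membership in `𝒥`: automorphisms of the product leaving every `A × X` invariant. -/
def MemJ {X : Type*} [MeasurableSpace X] {μ : Measure X}
    (J : Aut (X × X) (μ.prod μ)) : Prop :=
  ∀ A : Set X, MeasurableSet A → J.toEquiv '' (A ×ˢ (univ : Set X)) = A ×ˢ (univ : Set X)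

set_option linter.unusedSectionVars false
namespace RecAux

open MeasureTheory Set ENNReal

section AutBasics

variable {Z : Type*} [MeasurableSpace Z] {ν : Measure Z}

theorem aut_ext {a b : Aut Z ν} (h : ∀ z, a.toEquiv z = b.toEquiv z) : a = b := by
  obtain ⟨ea, ha⟩ := a; obtain ⟨eb, hb⟩ := b
  obtain rfl : ea = eb := MeasurableEquiv.ext (funext h)
  rfl

@[simp] theorem comp_apply (a b : Aut Z ν) (z : Z) :
    (a.comp b).toEquiv z = a.toEquiv (b.toEquiv z) := rfl

@[simp] theorem comp_symm_apply (a b : Aut Z ν) (z : Z) :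
    (a.comp b).toEquiv.symm z = b.toEquiv.symm (a.toEquiv.symm z) := rfl

@[simp] theorem id_apply (z : Z) : (Aut.id ν).toEquiv z = z := rfl

@[simp] theorem id_symm_apply (z : Z) : (Aut.id ν).toEquiv.symm z = z := rfl

@[simp] theorem inv_apply (a : Aut Z ν) (z : Z) : (a.inv).toEquiv z = a.toEquiv.symm z := rfl

@[simp] theorem inv_symm_apply (a : Aut Z ν) (z : Z) : (a.inv).toEquiv.symm z = a.toEquiv z := rfl

theorem comp_id (a : Aut Z ν) : a.comp (Aut.id ν) = a := aut_ext fun _ => rfl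

theorem id_comp (a : Aut Z ν) : (Aut.id ν).comp a = a := aut_ext fun _ => rfl

theorem comp_assoc (a b c : Aut Z ν) : (a.comp b).comp c = a.comp (b.comp c) :=
  aut_ext fun _ => rfl

theorem inv_comp_self (a : Aut Z ν) : (a.inv).comp a = Aut.id ν :=
  aut_ext fun z => a.toEquiv.symm_apply_apply z

noncomputable def autPow (a : Aut Z ν) : ℕ → Aut Z ν
  | 0 => Aut.id ν
  | n+1 => a.comp (autPow a n)

theorem autPow_apply (a : Aut Z ν) (n : ℕ) (z : Z) :
    (autPow a n).toEquiv z = (⇑a.toEquiv)^[n] z := by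
  induction n with
  | zero => rfl
  | succ n ih =>
    rw [Function.iterate_succ_apply']
    show a.toEquiv ((autPow a n).toEquiv z) = _
    rw [ih]

theorem autPow_symm_apply (a : Aut Z ν) (n : ℕ) (z : Z) :
    (autPow a n).toEquiv.symm z = (⇑a.toEquiv.symm)^[n] z := by
  induction n generalizing z with
  | zero => rfl
  | succ n ih =>
    rw [Function.iterate_succ_apply]
    show (autPow a n).toEquiv.symm (a.toEquiv.symm z) = _
    rw [ih]

theorem image_measurableSet (a : Aut Z ν) {V : Set Z} (hV : MeasurableSet V) :
    MeasurableSet (a.toEquiv '' V) := by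
  rw [MeasurableEquiv.image_eq_preimage_symm]
  exact a.toEquiv.symm.measurable hV

theorem image_measure (a : Aut Z ν) {V : Set Z} (hV : MeasurableSet V) :
    ν (a.toEquiv '' V) = ν V := by
  rw [MeasurableEquiv.image_eq_preimage_symm]
  exact a.inv.mp.measure_preimage hV.nullMeasurableSet

theorem image_symm_measurableSet (a : Aut Z ν) {V : Set Z} (hV : MeasurableSet V) :
    MeasurableSet (a.toEquiv.symm '' V) := image_measurableSet a.inv hV

theorem image_symm_measure (a : Aut Z ν) {V : Set Z} (hV : MeasurableSet V) :
    ν (a.toEquiv.symm '' V) = ν V := image_measure a.inv hV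

theorem measure_symmDiff_triangle (P Q R : Set Z) :
    ν (symmDiff P R) ≤ ν (symmDiff P Q) + ν (symmDiff Q R) :=
  le_trans (measure_mono (le_trans (symmDiff_triangle P Q R) le_rfl)) (measure_union_le _ _)

end AutBasics

section Halmos

variable {Z : Type*} [MeasurableSpace Z] {ν : Measure Z} [IsProbabilityMeasure ν]
  (A : ℕ → Set Z)

theorem halmos_term_le (a b : Aut Z ν) (i : ℕ) :
    (1 / 2 : ℝ) ^ i *
      ((ν (symmDiff (a.toEquiv '' A i) (b.toEquiv '' A i))).toReal +
       (ν (symmDiff (a.toEquiv.symm '' A i) (b.toEquiv.symm '' A i))).toReal) ≤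
      (1 / 2 : ℝ) ^ i * 2 := by
  apply mul_le_mul_of_nonneg_left _ (by positivity)
  have h1 : (ν (symmDiff (a.toEquiv '' A i) (b.toEquiv '' A i))).toReal ≤ 1 := by
    refine le_trans (ENNReal.toReal_mono one_ne_top (prob_le_one)) (by norm_num)
  have h2 : (ν (symmDiff (a.toEquiv.symm '' A i) (b.toEquiv.symm '' A i))).toReal ≤ 1 := by
    refine le_trans (ENNReal.toReal_mono one_ne_top (prob_le_one)) (by norm_num)
  linarith

theorem halmos_term_nonneg (a b : Aut Z ν) (i : ℕ) :
    0 ≤ (1 / 2 : ℝ) ^ i *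
      ((ν (symmDiff (a.toEquiv '' A i) (b.toEquiv '' A i))).toReal +
       (ν (symmDiff (a.toEquiv.symm '' A i) (b.toEquiv.symm '' A i))).toReal) := by
  positivity

theorem halmos_summable (a b : Aut Z ν) :
    Summable (fun i => (1 / 2 : ℝ) ^ i *
      ((ν (symmDiff (a.toEquiv '' A i) (b.toEquiv '' A i))).toReal +
       (ν (symmDiff (a.toEquiv.symm '' A i) (b.toEquiv.symm '' A i))).toReal)) := by
  refine Summable.of_nonneg_of_le (halmos_term_nonneg A a b) (halmos_term_le A a b) ?_
  exact (summable_geometric_of_lt_one (by norm_num) (by norm_num)).mul_right 2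

theorem halmos_nonneg (a b : Aut Z ν) : 0 ≤ halmos A a b :=
  tsum_nonneg (halmos_term_nonneg A a b)

theorem halmos_self (a : Aut Z ν) : halmos A a a = 0 := by
  unfold halmos
  simp [symmDiff_self]

theorem halmos_comm (a b : Aut Z ν) : halmos A a b = halmos A b a := by
  unfold halmos
  congr 1; funext i; rw [symmDiff_comm (a.toEquiv '' A i), symmDiff_comm (a.toEquiv.symm '' A i)]

theorem halmos_triangle (a b c : Aut Z ν) :
    halmos A a c ≤ halmos A a b + halmos A b c := by
  unfold halmos
  rw [← Summable.tsum_add (halmos_summable A a b) (halmos_summable A b c)]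
  refine Summable.tsum_le_tsum ?_ (halmos_summable A a c)
    ((halmos_summable A a b).add (halmos_summable A b c))
  intro i
  rw [← mul_add]
  apply mul_le_mul_of_nonneg_left _ (by positivity)
  have t1 := measure_symmDiff_triangle (ν := ν) (a.toEquiv '' A i) (b.toEquiv '' A i)
    (c.toEquiv '' A i)
  have t2 := measure_symmDiff_triangle (ν := ν) (a.toEquiv.symm '' A i) (b.toEquiv.symm '' A i)
    (c.toEquiv.symm '' A i)
  have fin : ∀ s : Set Z, ν s ≠ ⊤ := fun s => (lt_of_le_of_lt prob_le_one one_lt_top).ne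
  have r1 : (ν (symmDiff (a.toEquiv '' A i) (c.toEquiv '' A i))).toReal ≤
      (ν (symmDiff (a.toEquiv '' A i) (b.toEquiv '' A i))).toReal +
      (ν (symmDiff (b.toEquiv '' A i) (c.toEquiv '' A i))).toReal := by
    rw [← ENNReal.toReal_add (fin _) (fin _)]
    exact ENNReal.toReal_mono (by rw [ENNReal.add_ne_top]; exact ⟨fin _, fin _⟩) t1
  have r2 : (ν (symmDiff (a.toEquiv.symm '' A i) (c.toEquiv.symm '' A i))).toReal ≤
      (ν (symmDiff (a.toEquiv.symm '' A i) (b.toEquiv.symm '' A i))).toReal +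
      (ν (symmDiff (b.toEquiv.symm '' A i) (c.toEquiv.symm '' A i))).toReal := by
    rw [← ENNReal.toReal_add (fin _) (fin _)]
    exact ENNReal.toReal_mono (by rw [ENNReal.add_ne_top]; exact ⟨fin _, fin _⟩) t2
  linarith

theorem le_halmos_fwd (a b : Aut Z ν) (j : ℕ) :
    (1 / 2 : ℝ) ^ j * (ν (symmDiff (a.toEquiv '' A j) (b.toEquiv '' A j))).toReal ≤
      halmos A a b := by
  unfold halmos
  refine le_trans ?_ (Summable.le_tsum (halmos_summable A a b) j
    (fun i _ => halmos_term_nonneg A a b i))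
  apply mul_le_mul_of_nonneg_left _ (by positivity)
  exact le_add_of_nonneg_right ENNReal.toReal_nonneg

theorem le_halmos_bwd (a b : Aut Z ν) (j : ℕ) :
    (1 / 2 : ℝ) ^ j * (ν (symmDiff (a.toEquiv.symm '' A j) (b.toEquiv.symm '' A j))).toReal ≤
      halmos A a b := by
  unfold halmos
  refine le_trans ?_ (Summable.le_tsum (halmos_summable A a b) j
    (fun i _ => halmos_term_nonneg A a b i))
  apply mul_le_mul_of_nonneg_left _ (by positivity)
  exact le_add_of_nonneg_left ENNReal.toReal_nonneg

theorem halmos_head_tail (a b : Aut Z ν) (I : ℕ) :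
    halmos A a b ≤ (∑ i ∈ Finset.range I, (1 / 2 : ℝ) ^ i *
      ((ν (symmDiff (a.toEquiv '' A i) (b.toEquiv '' A i))).toReal +
       (ν (symmDiff (a.toEquiv.symm '' A i) (b.toEquiv.symm '' A i))).toReal)) +
      4 * (1 / 2 : ℝ) ^ I := by
  unfold halmos
  rw [← Summable.sum_add_tsum_nat_add I (halmos_summable A a b)]
  gcongr
  have hs2 : Summable (fun i : ℕ => (1 / 2 : ℝ) ^ (i + I) * 2) := by
    simpa [pow_add] using (((summable_geometric_of_lt_one (by norm_num : (0:ℝ) ≤ 1/2)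
      (by norm_num)).mul_right ((1/2:ℝ)^I)).mul_right 2)
  calc (∑' i : ℕ, (1 / 2 : ℝ) ^ (i + I) *
      ((ν (symmDiff (a.toEquiv '' A (i + I)) (b.toEquiv '' A (i + I)))).toReal +
       (ν (symmDiff (a.toEquiv.symm '' A (i + I)) (b.toEquiv.symm '' A (i + I)))).toReal))
      ≤ ∑' i : ℕ, (1 / 2 : ℝ) ^ (i + I) * 2 := by
        refine Summable.tsum_le_tsum (fun i => halmos_term_le A a b (i + I)) ?_ hs2
        exact (halmos_summable A a b).comp_injective (add_left_injective I)
    _ = 4 * (1 / 2 : ℝ) ^ I := by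
        have : ∀ i : ℕ, (1 / 2 : ℝ) ^ (i + I) * 2 = ((1/2:ℝ)^I * 2) * (1/2:ℝ)^i := by
          intro i; rw [pow_add]; ring
        rw [tsum_congr this, tsum_mul_left, tsum_geometric_of_lt_one (by norm_num) (by norm_num)]
        norm_num
        ring

end Halmos

end RecAux
namespace RecAux

open MeasureTheory Set ENNReal

section Cocycle

variable {X : Type*} [MeasurableSpace X] {μ : Measure X} {S : Aut X μ}

theorem cocycle_zero (T : X → Aut X μ) (x : X) : cocycle S T x 0 = Aut.id μ := rfl

theorem cocycle_succ (T : X → Aut X μ) (x : X) (n : ℕ) :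
    cocycle S T x (n + 1) = (T ((⇑S.toEquiv)^[n] x)).comp (cocycle S T x n) := rfl

theorem cocycle_add (T : X → Aut X μ) (x : X) (a b : ℕ) :
    cocycle S T x (a + b) =
      (cocycle S T ((⇑S.toEquiv)^[a] x) b).comp (cocycle S T x a) := by
  induction b with
  | zero => simp [cocycle_zero, id_comp]
  | succ b ih =>
    have : a + (b + 1) = (a + b) + 1 := rfl
    rw [this, cocycle_succ, ih, cocycle_succ, comp_assoc]
    congr 2
    rw [← Function.iterate_add_apply, Nat.add_comm b a]

theorem prod_iterate (E : SkewExt S) (x y : X) (n : ℕ) :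
    (⇑E.prod.toEquiv)^[n] (x, y) =
      ((⇑S.toEquiv)^[n] x, (cocycle S E.T x n).toEquiv y) := by
  induction n with
  | zero => rfl
  | succ n ih =>
    rw [Function.iterate_succ_apply', ih, Function.iterate_succ_apply', E.spec]
    rfl

theorem prod_symm_iterate (E : SkewExt S) (u v : X) (n : ℕ) :
    (⇑E.prod.toEquiv.symm)^[n] (u, v) =
      ((⇑S.toEquiv.symm)^[n] u,
        (cocycle S E.T ((⇑S.toEquiv.symm)^[n] u) n).toEquiv.symm v) := by
  have hbase : Function.LeftInverse ⇑E.prod.toEquiv.symm ⇑E.prod.toEquiv :=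
    E.prod.toEquiv.symm_apply_apply
  have hli : Function.LeftInverse (⇑E.prod.toEquiv.symm)^[n] (⇑E.prod.toEquiv)^[n] :=
    hbase.iterate n
  have hfwd : (⇑E.prod.toEquiv)^[n]
      ((⇑S.toEquiv.symm)^[n] u,
        (cocycle S E.T ((⇑S.toEquiv.symm)^[n] u) n).toEquiv.symm v) = (u, v) := by
    rw [prod_iterate]
    have hbase2 : Function.LeftInverse ⇑S.toEquiv ⇑S.toEquiv.symm :=
      S.toEquiv.apply_symm_apply
    have h1 : (⇑S.toEquiv)^[n] ((⇑S.toEquiv.symm)^[n] u) = u :=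
      hbase2.iterate n u
    rw [h1, MeasurableEquiv.apply_symm_apply]
  calc (⇑E.prod.toEquiv.symm)^[n] (u, v)
      = (⇑E.prod.toEquiv.symm)^[n] ((⇑E.prod.toEquiv)^[n]
          ((⇑S.toEquiv.symm)^[n] u,
            (cocycle S E.T ((⇑S.toEquiv.symm)^[n] u) n).toEquiv.symm v)) := by rw [hfwd]
    _ = _ := hli _

end Cocycle

section Glue

variable {Z : Type*} [MeasurableSpace Z] {ν : Measure Z}

/-- Gluing countably many automorphisms along an invariant countable partition. -/
noncomputable def glueAut (idx : Z → ℕ) (Φ : ℕ → Aut Z ν)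
    (hm : ∀ s, MeasurableSet (idx ⁻¹' {s}))
    (hfix : ∀ s z, idx z = idx ((Φ s).toEquiv z)) : Aut Z ν := by
  classical
  have hfix' : ∀ s z, idx z = idx ((Φ s).toEquiv.symm z) := by
    intro s z
    have := hfix s ((Φ s).toEquiv.symm z)
    rw [MeasurableEquiv.apply_symm_apply] at this
    exact this.symm
  refine ⟨⟨⟨fun z => (Φ (idx z)).toEquiv z, fun z => (Φ (idx z)).toEquiv.symm z, ?_, ?_⟩, ?_, ?_⟩, ?_⟩
  · intro z
    simp only []
    rw [← hfix (idx z) z, MeasurableEquiv.symm_apply_apply]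
  · intro z
    simp only []
    rw [← hfix' (idx z) z, MeasurableEquiv.apply_symm_apply]
  · intro M hM
    have : (fun z => (Φ (idx z)).toEquiv z) ⁻¹' M =
        ⋃ s, (idx ⁻¹' {s}) ∩ ((Φ s).toEquiv ⁻¹' M) := by
      ext z
      simp only [mem_preimage, mem_iUnion, mem_inter_iff, mem_singleton_iff]
      constructor
      · intro h; exact ⟨idx z, rfl, h⟩
      · rintro ⟨s, rfl, h⟩; exact h
    show MeasurableSet ((fun z => (Φ (idx z)).toEquiv z) ⁻¹' M)
    rw [this]
    exact MeasurableSet.iUnion fun s => (hm s).inter ((Φ s).toEquiv.measurable hM)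
  · intro M hM
    have : (fun z => (Φ (idx z)).toEquiv.symm z) ⁻¹' M =
        ⋃ s, (idx ⁻¹' {s}) ∩ ((Φ s).toEquiv.symm ⁻¹' M) := by
      ext z
      simp only [mem_preimage, mem_iUnion, mem_inter_iff, mem_singleton_iff]
      constructor
      · intro h; exact ⟨idx z, rfl, h⟩
      · rintro ⟨s, rfl, h⟩; exact h
    show MeasurableSet ((fun z => (Φ (idx z)).toEquiv.symm z) ⁻¹' M)
    rw [this]
    exact MeasurableSet.iUnion fun s => (hm s).inter ((Φ s).toEquiv.symm.measurable hM)
  · constructor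
    · intro M hM
      have : (fun z => (Φ (idx z)).toEquiv z) ⁻¹' M =
          ⋃ s, (idx ⁻¹' {s}) ∩ ((Φ s).toEquiv ⁻¹' M) := by
        ext z
        simp only [mem_preimage, mem_iUnion, mem_inter_iff, mem_singleton_iff]
        constructor
        · intro h; exact ⟨idx z, rfl, h⟩
        · rintro ⟨s, rfl, h⟩; exact h
      show MeasurableSet ((fun z => (Φ (idx z)).toEquiv z) ⁻¹' M)
      rw [this]
      exact MeasurableSet.iUnion fun s => (hm s).inter ((Φ s).toEquiv.measurable hM)
    · refine Measure.ext fun M hM => ?_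
      rw [Measure.map_apply ?meas hM]
      case meas =>
        intro M hM
        have : (fun z => (Φ (idx z)).toEquiv z) ⁻¹' M =
            ⋃ s, (idx ⁻¹' {s}) ∩ ((Φ s).toEquiv ⁻¹' M) := by
          ext z
          simp only [mem_preimage, mem_iUnion, mem_inter_iff, mem_singleton_iff]
          constructor
          · intro h; exact ⟨idx z, rfl, h⟩
          · rintro ⟨s, rfl, h⟩; exact h
        show MeasurableSet ((fun z => (Φ (idx z)).toEquiv z) ⁻¹' M)
        rw [this]
        exact MeasurableSet.iUnion fun s => (hm s).inter ((Φ s).toEquiv.measurable hM)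
      have hpre : ∀ s : ℕ, (Φ s).toEquiv ⁻¹' (idx ⁻¹' {s}) = idx ⁻¹' {s} := by
        intro s
        ext z
        simp only [mem_preimage, mem_singleton_iff]
        constructor
        · intro h; rw [hfix s z]; exact h
        · intro h; rw [← hfix s z]; exact h
      have hsplit : (fun z => (Φ (idx z)).toEquiv z) ⁻¹' M =
          ⋃ s, (Φ s).toEquiv ⁻¹' (M ∩ idx ⁻¹' {s}) := by
        ext z
        simp only [mem_preimage, mem_iUnion, mem_inter_iff, mem_singleton_iff]
        constructor
        · intro h
          refine ⟨idx z, h, ?_⟩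
          exact (hfix (idx z) z).symm
        · rintro ⟨s, h1, h2⟩
          have : idx z = s := by rw [hfix s z]; exact h2
          rw [this]; exact h1
      show ν ((fun z => (Φ (idx z)).toEquiv z) ⁻¹' M) = ν M
      rw [hsplit]
      have hdisj : Pairwise (Function.onFun Disjoint
          fun s => (Φ s).toEquiv ⁻¹' (M ∩ idx ⁻¹' {s})) := by
        intro s t hst
        refine Set.disjoint_left.2 fun z hz1 hz2 => ?_
        simp only [mem_preimage, mem_inter_iff, mem_singleton_iff] at hz1 hz2
        rw [← hfix s z] at hz1
        rw [← hfix t z] at hz2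
        exact hst (hz1.2.symm.trans hz2.2)
      have hmeas : ∀ s : ℕ, MeasurableSet ((Φ s).toEquiv ⁻¹' (M ∩ idx ⁻¹' {s})) :=
        fun s => (Φ s).toEquiv.measurable (hM.inter (hm s))
      rw [measure_iUnion hdisj hmeas]
      have hval : ∀ s : ℕ, ν ((Φ s).toEquiv ⁻¹' (M ∩ idx ⁻¹' {s})) = ν (M ∩ idx ⁻¹' {s}) :=
        fun s => (Φ s).mp.measure_preimage (hM.inter (hm s)).nullMeasurableSet
      rw [tsum_congr hval]
      have hcover : (⋃ s, M ∩ idx ⁻¹' {s}) = M := by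
        ext z
        simp only [mem_iUnion, mem_inter_iff, mem_preimage, mem_singleton_iff]
        constructor
        · rintro ⟨s, h, _⟩; exact h
        · intro h; exact ⟨idx z, h, rfl⟩
      rw [← measure_iUnion ?_ (fun s => hM.inter (hm s)), hcover]
      intro s t hst
      refine Set.disjoint_left.2 fun z hz1 hz2 => ?_
      simp only [mem_inter_iff, mem_preimage, mem_singleton_iff] at hz1 hz2
      exact hst (hz1.2.symm.trans hz2.2)

theorem glueAut_apply (idx : Z → ℕ) (Φ : ℕ → Aut Z ν) (hm) (hfix) (z : Z) :
    (glueAut idx Φ hm hfix).toEquiv z = (Φ (idx z)).toEquiv z := rfl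

end Glue

end RecAux
namespace RecAux

open MeasureTheory Set ENNReal

section Small

variable {X : Type*} [MeasurableSpace X] {μ : Measure X} [IsProbabilityMeasure μ]

theorem measure_singleton_iterate [MeasurableSingletonClass X] (S : Aut X μ) (a : X) (k : ℕ) :
    μ {(⇑S.toEquiv)^[k] a} = μ {a} := by
  induction k with
  | zero => rfl
  | succ k ih =>
    rw [Function.iterate_succ_apply', ← ih]
    have : S.toEquiv ⁻¹' {S.toEquiv ((⇑S.toEquiv)^[k] a)} = {(⇑S.toEquiv)^[k] a} := by
      ext z; simp [EmbeddingLike.apply_eq_iff_eq]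
    have hpre := S.mp.measure_preimage
      (s := {S.toEquiv ((⇑S.toEquiv)^[k] a)}) (measurableSet_singleton _).nullMeasurableSet
    rw [this] at hpre
    exact hpre.symm

theorem no_atoms_of_aperiodic [MeasurableSingletonClass X] {S : Aut X μ} (hS : Aperiodic S)
    (a : X) : μ {a} = 0 := by
  by_contra h
  by_cases hper : ∃ p q : ℕ, p < q ∧ (⇑S.toEquiv)^[p] a = (⇑S.toEquiv)^[q] a
  · obtain ⟨p, q, hpq, heq⟩ := hper
    set n := q - p with hn
    have hn1 : 1 ≤ n := by omega
    set b := (⇑S.toEquiv)^[p] a with hb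
    have hper' : (⇑S.toEquiv)^[n] b = b := by
      rw [hb, ← Function.iterate_add_apply]
      have : n + p = q := by omega
      rw [this, ← heq]
    have hsub : {b} ⊆ {x : X | (⇑S.toEquiv)^[n] x = x} := by
      intro z hz; rw [mem_singleton_iff] at hz; subst hz; exact hper'
    have := measure_mono (μ := μ) hsub
    rw [hS n hn1, measure_singleton_iterate S a p] at this
    exact h (le_antisymm (by simpa using this) zero_le)
  · push_neg at hper
    have hinj : Function.Injective (fun k : ℕ => (⇑S.toEquiv)^[k] a) := by
      intro p q hpq
      by_contra hne
      rcases Nat.lt_or_ge p q with h1 | h1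
      · exact hper p q h1 hpq
      · have h2 : q < p := by omega
        exact hper q p h2 hpq.symm
    have hc : μ {a} ≤ 1 := prob_le_one
    have hc0 : μ {a} ≠ 0 := h
    have hmtop : μ {a} ≠ ⊤ := (hc.trans_lt one_lt_top).ne
    obtain ⟨K, hK⟩ := ENNReal.exists_nat_gt
      (show (1 / μ {a}) ≠ ⊤ by simp [ENNReal.div_eq_top, hc0])
    have hKc : 1 < (K : ℝ≥0∞) * μ {a} := by
      have h2 := (ENNReal.div_lt_iff (Or.inl hc0) (Or.inl hmtop)).1 hK
      exact h2
    have hbound : μ (⋃ k ∈ Finset.range K, {(⇑S.toEquiv)^[k] a}) ≤ 1 := prob_le_one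
    rw [measure_biUnion_finset ?hd (fun k _ => measurableSet_singleton _)] at hbound
    case hd =>
      intro p hp q hq hpq
      simp only [Function.onFun]
      refine Set.disjoint_left.2 fun z hz1 hz2 => ?_
      rw [mem_singleton_iff] at hz1 hz2
      exact hpq (hinj (hz1.symm.trans hz2))
    rw [Finset.sum_congr rfl (fun k _ => measure_singleton_iterate S a k)] at hbound
    rw [Finset.sum_const, Finset.card_range, nsmul_eq_mul] at hbound
    exact absurd hbound (not_le.2 hKc)

theorem exists_small_set [StandardBorelSpace X] (hNA : ∀ a : X, μ {a} = 0)
    {ε : ℝ≥0∞} (hε : ε ≠ 0) : ∃ B : Set X, MeasurableSet B ∧ 0 < μ B ∧ μ B < ε := by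
  by_contra hno
  push_neg at hno
  have hno' : ∀ B : Set X, MeasurableSet B → μ B ≠ 0 → ε ≤ μ B := by
    intro B hB h0
    exact hno B hB (pos_iff_ne_zero.2 h0)
  classical
  set V : Set ℝ≥0∞ := {r | ∃ B : Set X, MeasurableSet B ∧ μ B = r ∧ r ≠ 0} with hV
  have hVne : V.Nonempty := ⟨μ univ, univ, MeasurableSet.univ, rfl, by simp⟩
  set c := sInf V with hc
  have hcε : ε ≤ c := le_sInf fun r hr => by
    obtain ⟨B, hB, hBr, hr0⟩ := hr
    exact hBr ▸ hno' B hB (hBr ▸ hr0)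
  have hc0 : c ≠ 0 := fun h => hε (le_antisymm (h ▸ hcε) zero_le)
  have hcle : c ≤ 1 := sInf_le ⟨univ, MeasurableSet.univ, measure_univ, one_ne_zero⟩
  have hctop : c ≠ ⊤ := (hcle.trans_lt one_lt_top).ne
  have hlt : c < c + c / 2 := ENNReal.lt_add_right hctop (by
    simp [ENNReal.div_eq_zero_iff, hc0])
  obtain ⟨r, hrV, hrlt⟩ := sInf_lt_iff.1 (hc ▸ hlt)
  obtain ⟨P, hPm, hPr, hr0⟩ := hrV
  have hPpos : μ P ≠ 0 := hPr ▸ hr0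
  have hPlt : μ P < c + c / 2 := hPr ▸ hrlt
  have hatom : ∀ Q : Set X, MeasurableSet Q → Q ⊆ P → μ Q = 0 ∨ μ (P \ Q) = 0 := by
    intro Q hQ hQP
    by_contra hq
    push_neg at hq
    obtain ⟨h1, h2⟩ := hq
    have e1 : c ≤ μ Q := hc ▸ sInf_le ⟨Q, hQ, rfl, h1⟩
    have e2 : c ≤ μ (P \ Q) := hc ▸ sInf_le ⟨P \ Q, hPm.diff hQ, rfl, h2⟩
    have : μ (P ∩ Q) + μ (P \ Q) = μ P := measure_inter_add_diff P hQ
    rw [inter_eq_self_of_subset_right hQP] at this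
    have : c + c ≤ μ P := this ▸ add_le_add e1 e2
    have h2c : c + c / 2 < c + c := by
      apply ENNReal.add_lt_add_left hctop
      exact ENNReal.half_lt_self hc0 hctop
    exact absurd (hPlt.trans h2c) (not_lt.2 this)
  obtain ⟨f, hf⟩ := MeasureTheory.exists_measurableEmbedding_real X
  set K : ℚ → Set X := fun q => f ⁻¹' (Iic (q : ℝ)) with hK
  have hKm : ∀ q, MeasurableSet (K q) := fun q => hf.measurable measurableSet_Iic
  set D : ℚ → Set X := fun q => if μ (P ∩ K q) = 0 then (K q)ᶜ else K q with hD
  have hDnull : ∀ q, μ (P \ D q) = 0 := by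
    intro q
    by_cases h : μ (P ∩ K q) = 0
    · simp only [hD, if_pos h]
      rw [diff_compl]
      exact h
    · simp only [hD, if_neg h]
      rcases hatom (P ∩ K q) (hPm.inter (hKm q)) inter_subset_left with h' | h'
      · exact absurd h' h
      · rwa [diff_self_inter] at h'
  set C := P ∩ ⋂ q, D q with hC
  have hCnull : μ (P \ ⋂ q, D q) = 0 := by
    rw [diff_iInter]
    exact measure_iUnion_null fun q => hDnull q
  have hCm : μ C = μ P := by
    have : C = P \ (P \ ⋂ q, D q) := by
      rw [diff_diff_right_self]
    rw [this, measure_diff_null hCnull]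
  have hCne : C.Nonempty := nonempty_of_measure_ne_zero (hCm ▸ hPpos)
  have hCsub : C.Subsingleton := by
    intro x hx y hy
    by_contra hxy
    have hfxy : f x ≠ f y := fun h => hxy (hf.injective h)
    have key : ∀ a b : X, a ∈ C → b ∈ C → f a < f b → False := by
      intro a b ha hb hab
      obtain ⟨q, hq1, hq2⟩ := exists_rat_btwn hab
      have haK : a ∈ K q := by simp [hK, hq1.le]
      have hbK : b ∉ K q := by simp [hK]; exact hq2
      have haD : a ∈ D q := mem_iInter.1 ha.2 q
      have hbD : b ∈ D q := mem_iInter.1 hb.2 q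
      by_cases h : μ (P ∩ K q) = 0
      · simp only [hD, if_pos h] at haD
        exact haD haK
      · simp only [hD, if_neg h] at hbD
        exact hbK hbD
    rcases lt_or_gt_of_ne hfxy with h | h
    · exact key x y hx hy h
    · exact key y x hy hx h
  obtain ⟨x, hx⟩ := hCne
  have : C ⊆ {x} := fun z hz => hCsub hz hx
  have : μ C = 0 := le_antisymm (le_trans (measure_mono this) (le_of_eq (hNA x))) zero_le
  exact hPpos (hCm ▸ this)

end Small

end RecAux
namespace RecAux

open MeasureTheory Set ENNReal

open scoped Classical in
/-- Backward hitting time of `B` (0 if `u ∉ B` or no return). -/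
noncomputable def retTime {X : Type*} [MeasurableSpace X] {μ : Measure X}
    (S : Aut X μ) (B : Set X) (u : X) : ℕ :=
  if h : u ∈ B ∧ ∃ s, 0 < s ∧ (⇑S.toEquiv.symm)^[s] u ∈ B then Nat.find h.2 else 0

section Density

variable {X : Type*} [MeasurableSpace X] {μ : Measure X} [IsProbabilityMeasure μ] {S : Aut X μ}
  {B : Set X}

theorem retTime_eq_zero_of_not_mem (hu : u ∉ B) : retTime S B u = 0 := by
  rw [retTime, dif_neg]
  tauto

theorem retTime_spec {u : X} {d : ℕ} (huB : u ∈ B) (hd : 0 < d)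
    (hmem : (⇑S.toEquiv.symm)^[d] u ∈ B)
    (hmin : ∀ s, 0 < s → s < d → (⇑S.toEquiv.symm)^[s] u ∉ B) :
    retTime S B u = d := by
  classical
  have hex : ∃ s, 0 < s ∧ (⇑S.toEquiv.symm)^[s] u ∈ B := ⟨d, hd, hmem⟩
  rw [retTime, dif_pos ⟨huB, hex⟩]
  rw [Nat.find_eq_iff]
  refine ⟨⟨hd, hmem⟩, ?_⟩
  intro s hs
  rintro ⟨hs0, hsB⟩
  exact hmin s hs0 hs hsB

theorem retTime_pos_spec {u : X} {d : ℕ} (h : retTime S B u = d) (hd : 0 < d) :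
    u ∈ B ∧ (⇑S.toEquiv.symm)^[d] u ∈ B ∧
      ∀ s, 0 < s → s < d → (⇑S.toEquiv.symm)^[s] u ∉ B := by
  classical
  by_cases hc : u ∈ B ∧ ∃ s, 0 < s ∧ (⇑S.toEquiv.symm)^[s] u ∈ B
  · rw [retTime, dif_pos hc] at h
    subst h
    refine ⟨hc.1, (Nat.find_spec hc.2).2, ?_⟩
    intro s hs0 hs hsB
    exact Nat.find_min hc.2 hs ⟨hs0, hsB⟩
  · rw [retTime, dif_neg hc] at h
    omega

theorem retTime_piece_measurable_succ (hB : MeasurableSet B) (d : ℕ) :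
    MeasurableSet (retTime S B ⁻¹' {d + 1}) := by
  have hiter : ∀ j : ℕ, MeasurableSet (((⇑S.toEquiv.symm)^[j]) ⁻¹' B) :=
    fun j => (S.toEquiv.symm.measurable.iterate j) hB
  have : retTime S B ⁻¹' {d + 1} =
        B ∩ ((⇑S.toEquiv.symm)^[d+1] ⁻¹' B) ∩
          ⋂ (j : ℕ) (_ : 0 < j) (_ : j < d + 1), ((⇑S.toEquiv.symm)^[j] ⁻¹' B)ᶜ := by
      ext u
      simp only [mem_preimage, mem_singleton_iff, mem_inter_iff, mem_iInter, mem_compl_iff]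
      constructor
      · intro h
        obtain ⟨h1, h2, h3⟩ := retTime_pos_spec h (Nat.succ_pos d)
        exact ⟨⟨h1, h2⟩, fun j hj1 hj2 => h3 j hj1 hj2⟩
      · rintro ⟨⟨h1, h2⟩, h3⟩
        exact retTime_spec h1 (Nat.succ_pos d) h2 (fun j hj1 hj2 => h3 j hj1 hj2)
  rw [this]
  refine (hB.inter (hiter _)).inter ?_
  exact MeasurableSet.iInter fun j => MeasurableSet.iInter fun _ =>
    MeasurableSet.iInter fun _ => (hiter j).compl

theorem retTime_piece_measurable (hB : MeasurableSet B) (s : ℕ) :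
    MeasurableSet (retTime S B ⁻¹' {s}) := by
  match s with
  | Nat.succ d => exact retTime_piece_measurable_succ hB d
  | 0 =>
    have : retTime S B ⁻¹' {0} = (⋃ d : ℕ, retTime S B ⁻¹' {d + 1})ᶜ := by
      ext u
      simp only [mem_preimage, mem_singleton_iff, mem_compl_iff, mem_iUnion]
      constructor
      · intro h; rintro ⟨d, hd⟩; omega
      · intro h
        by_contra h0
        exact h ⟨retTime S B u - 1, by omega⟩
    rw [this]
    exact (MeasurableSet.iUnion fun d => retTime_piece_measurable_succ hB d).compl

variable [StandardBorelSpace X]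

/-- The correcting automorphism family. -/
noncomputable def phiCorr (E : SkewExt S) (s : ℕ) : Aut (X × X) (μ.prod μ) :=
  (autPow (prodId S) s).comp (autPow (E.prod.inv) s)

theorem prodId_pow_apply (s : ℕ) (z : X × X) :
    (autPow (prodId S) s).toEquiv z = ((⇑S.toEquiv)^[s] z.1, z.2) := by
  rw [autPow_apply]
  induction s with
  | zero => rfl
  | succ s ih =>
    rw [Function.iterate_succ_apply', Function.iterate_succ_apply', ih]
    rfl

theorem phiCorr_apply (E : SkewExt S) (s : ℕ) (u v : X) :
    (phiCorr E s).toEquiv (u, v) =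
      (u, (cocycle S E.T ((⇑S.toEquiv.symm)^[s] u) s).toEquiv.symm v) := by
  show (autPow (prodId S) s).toEquiv ((autPow (E.prod.inv) s).toEquiv (u, v)) = _
  have h1 : (autPow (E.prod.inv) s).toEquiv (u, v) =
      ((⇑S.toEquiv.symm)^[s] u,
        (cocycle S E.T ((⇑S.toEquiv.symm)^[s] u) s).toEquiv.symm v) := by
    rw [autPow_apply]
    have : ⇑(E.prod.inv).toEquiv = ⇑E.prod.toEquiv.symm := rfl
    rw [this, prod_symm_iterate]
  rw [h1, prodId_pow_apply]
  have hbase : Function.LeftInverse ⇑S.toEquiv ⇑S.toEquiv.symm := S.toEquiv.apply_symm_apply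
  rw [hbase.iterate s u]

theorem phiCorr_fst (E : SkewExt S) (s : ℕ) (z : X × X) :
    ((phiCorr E s).toEquiv z).1 = z.1 := by
  obtain ⟨u, v⟩ := z
  rw [phiCorr_apply]

/-- The glued correction automorphism. -/
noncomputable def corrAut (E : SkewExt S) (B : Set X) (hB : MeasurableSet B) :
    Aut (X × X) (μ.prod μ) :=
  glueAut (fun z : X × X => retTime S B z.1) (phiCorr E)
    (by
      intro s
      have : (fun z : X × X => retTime S B z.1) ⁻¹' {s} =
          (retTime S B ⁻¹' {s}) ×ˢ (univ : Set X) := by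
        ext z; simp [Set.mem_prod]
      rw [this]
      exact (retTime_piece_measurable hB s).prod MeasurableSet.univ)
    (by
      intro s z
      show retTime S B z.1 = retTime S B ((phiCorr E s).toEquiv z).1
      rw [phiCorr_fst])

theorem corrAut_apply (E : SkewExt S) (B : Set X) (hB : MeasurableSet B) (u v : X) :
    (corrAut E B hB).toEquiv (u, v) =
      (u, (cocycle S E.T ((⇑S.toEquiv.symm)^[retTime S B u] u)
        (retTime S B u)).toEquiv.symm v) := by
  show (phiCorr E (retTime S B u)).toEquiv (u, v) = _
  rw [phiCorr_apply]

theorem corrAut_fst (E : SkewExt S) (B : Set X) (hB : MeasurableSet B) (z : X × X) :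
    ((corrAut E B hB).toEquiv z).1 = z.1 := by
  obtain ⟨u, v⟩ := z
  rw [corrAut_apply]

/-- Fiber correction. -/
noncomputable def lCorr (E : SkewExt S) (B : Set X) (u : X) : Aut X μ :=
  (cocycle S E.T ((⇑S.toEquiv.symm)^[retTime S B u] u) (retTime S B u)).inv

theorem lCorr_of_not_mem (E : SkewExt S) {u : X} (hu : u ∉ B) :
    lCorr E B u = Aut.id μ := by
  rw [lCorr, retTime_eq_zero_of_not_mem hu]
  exact aut_ext fun z => rfl

theorem lCorr_of_retTime_zero (E : SkewExt S) {u : X} (hu : retTime S B u = 0) :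
    lCorr E B u = Aut.id μ := by
  rw [lCorr, hu]
  exact aut_ext fun z => rfl

/-- The perturbed extension. -/
noncomputable def perturb (E : SkewExt S) (B : Set X) (hB : MeasurableSet B) : SkewExt S where
  T := fun x => (lCorr E B (S.toEquiv x)).comp (E.T x)
  prod := (corrAut E B hB).comp E.prod
  spec := by
    intro p
    show (corrAut E B hB).toEquiv (E.prod.toEquiv p) = _
    rw [E.spec]
    rw [corrAut_apply]
    rfl

theorem perturb_T (E : SkewExt S) (B : Set X) (hB : MeasurableSet B) (x : X) :
    (perturb E B hB).T x = (lCorr E B (S.toEquiv x)).comp (E.T x) := rfl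

theorem perturb_excursion (E : SkewExt S) (hB : MeasurableSet B) (z : X) :
    ∀ d, 0 < d → (∀ t, 0 < t → t < d → (⇑S.toEquiv)^[t] z ∉ B) →
      cocycle S (perturb E B hB).T z d =
        (lCorr E B ((⇑S.toEquiv)^[d] z)).comp (cocycle S E.T z d) := by
  intro d
  induction d with
  | zero => omega
  | succ d ih =>
    intro _ hmid
    by_cases hd : d = 0
    · subst hd
      rw [cocycle_succ, cocycle_succ]
      show ((perturb E B hB).T z).comp (Aut.id μ) = _
      rw [comp_id, perturb_T]
      rfl
    · have hd0 : 0 < d := Nat.pos_of_ne_zero hd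
      rw [cocycle_succ, ih hd0 (fun t ht1 ht2 => hmid t ht1 (by omega)), perturb_T]
      have hLid : lCorr E B ((⇑S.toEquiv)^[d] z) = Aut.id μ :=
        lCorr_of_not_mem E (hmid d hd0 (by omega))
      rw [hLid, id_comp]
      have hstep : S.toEquiv ((⇑S.toEquiv)^[d] z) = (⇑S.toEquiv)^[d+1] z :=
        (Function.iterate_succ_apply' _ _ _).symm
      rw [hstep, comp_assoc]
      congr 1

theorem retTime_arrival (E : SkewExt S) {z : X} {d : ℕ} (hz : z ∈ B) (hd : 0 < d)
    (harr : (⇑S.toEquiv)^[d] z ∈ B)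
    (hmid : ∀ t, 0 < t → t < d → (⇑S.toEquiv)^[t] z ∉ B) :
    retTime S B ((⇑S.toEquiv)^[d] z) = d := by
  have hbase : Function.LeftInverse ⇑S.toEquiv.symm ⇑S.toEquiv := S.toEquiv.symm_apply_apply
  have hback : ∀ s : ℕ, s ≤ d →
      (⇑S.toEquiv.symm)^[s] ((⇑S.toEquiv)^[d] z) = (⇑S.toEquiv)^[d - s] z := by
    intro s hs
    have : (⇑S.toEquiv)^[d] z = (⇑S.toEquiv)^[s] ((⇑S.toEquiv)^[d - s] z) := by
      rw [← Function.iterate_add_apply]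
      congr 1
      omega
    rw [this, hbase.iterate s]
  refine retTime_spec harr hd ?_ ?_
  · rw [hback d le_rfl, Nat.sub_self]
    exact hz
  · intro s hs0 hsd
    rw [hback s hsd.le]
    exact hmid (d - s) (by omega) (by omega)

theorem perturb_cocycle_eq_id (E : SkewExt S) (hB : MeasurableSet B) :
    ∀ n, ∀ x, 0 < n → x ∈ B → (⇑S.toEquiv)^[n] x ∈ B →
      cocycle S (perturb E B hB).T x n = Aut.id μ := by
  classical
  intro n
  induction n using Nat.strong_induction_on with
  | _ n IH =>
    intro x hn hx hnx
    set P : ℕ → Prop := fun t => (⇑S.toEquiv)^[t] x ∈ B with hP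
    have hP0 : P 0 := hx
    set j := Nat.findGreatest P (n - 1) with hj
    have hjle : j ≤ n - 1 := Nat.findGreatest_le _
    have hjB : P j := Nat.findGreatest_spec (Nat.zero_le _) hP0
    have hmax : ∀ t, j < t → t ≤ n - 1 → ¬P t := fun t h1 h2 =>
      Nat.findGreatest_is_greatest h1 h2
    have hsplit : n = j + (n - j) := by omega
    rw [hsplit, cocycle_add]
    have part1 : cocycle S (perturb E B hB).T x j = Aut.id μ := by
      by_cases hj0 : j = 0
      · rw [hj0]; rfl
      · exact IH j (by omega) x (Nat.pos_of_ne_zero hj0) hx hjB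
    set z := (⇑S.toEquiv)^[j] x with hz
    set d := n - j with hd
    have hd0 : 0 < d := by omega
    have harr : (⇑S.toEquiv)^[d] z ∈ B := by
      rw [hz, ← Function.iterate_add_apply]
      have : d + j = n := by omega
      rw [this]
      exact hnx
    have hmid : ∀ t, 0 < t → t < d → (⇑S.toEquiv)^[t] z ∉ B := by
      intro t ht1 ht2
      rw [hz, ← Function.iterate_add_apply]
      exact hmax (t + j) (by omega) (by omega)
    have part2 : cocycle S (perturb E B hB).T z d = Aut.id μ := by
      rw [perturb_excursion E hB z d hd0 hmid]
      have hret : retTime S B ((⇑S.toEquiv)^[d] z) = d := retTime_arrival E hjB hd0 harr hmid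
      have hLval : lCorr E B ((⇑S.toEquiv)^[d] z) = (cocycle S E.T z d).inv := by
        rw [lCorr, hret]
        congr 2
        have hbase : Function.LeftInverse ⇑S.toEquiv.symm ⇑S.toEquiv := S.toEquiv.symm_apply_apply
        rw [hbase.iterate d]
      rw [hLval, inv_comp_self]
    rw [part1, part2, comp_id]

end Density

end RecAux
namespace RecAux

open MeasureTheory Set ENNReal

section Support

variable {Z : Type*} [MeasurableSpace Z] {ν : Measure Z}

theorem symmDiff_image_subset (G : Aut Z ν) (Bz : Set Z)
    (hfixout : ∀ z ∉ Bz, G.toEquiv z = z) (hin : ∀ z ∈ Bz, G.toEquiv z ∈ Bz)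
    (W : Set Z) : symmDiff W (G.toEquiv '' W) ⊆ Bz := by
  intro z hz
  rw [Set.mem_symmDiff] at hz
  rcases hz with ⟨hzW, hzI⟩ | ⟨hzI, hzW⟩
  · by_contra hzB
    exact hzI ⟨z, hzW, hfixout z hzB⟩
  · obtain ⟨w, hwW, hwz⟩ := hzI
    by_contra hzB
    by_cases hwB : w ∈ Bz
    · exact hzB (hwz ▸ hin w hwB)
    · rw [hfixout w hwB] at hwz
      exact hzW (hwz ▸ hwW)

theorem inv_fixout (G : Aut Z ν) (Bz : Set Z)
    (hfixout : ∀ z ∉ Bz, G.toEquiv z = z) (hin : ∀ z ∈ Bz, G.toEquiv z ∈ Bz) :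
    ∀ z ∉ Bz, G.toEquiv.symm z = z := by
  intro z hz
  by_cases hw : G.toEquiv.symm z ∈ Bz
  · exact absurd ((G.toEquiv.apply_symm_apply z) ▸ hin _ hw) hz
  · have h2 := hfixout _ hw
    rw [G.toEquiv.apply_symm_apply z] at h2
    exact h2.symm

theorem inv_in (G : Aut Z ν) (Bz : Set Z)
    (hfixout : ∀ z ∉ Bz, G.toEquiv z = z) (hin : ∀ z ∈ Bz, G.toEquiv z ∈ Bz) :
    ∀ z ∈ Bz, G.toEquiv.symm z ∈ Bz := by
  intro z hz
  by_contra hw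
  have := hfixout _ hw
  rw [G.toEquiv.apply_symm_apply z] at this
  exact hw (this ▸ hz)

end Support

section PerturbClose

variable {X : Type*} [MeasurableSpace X] {μ : Measure X} [IsProbabilityMeasure μ] {S : Aut X μ}
  {B : Set X} [StandardBorelSpace X]

theorem corrAut_fixout (E : SkewExt S) (hB : MeasurableSet B) :
    ∀ z ∉ B ×ˢ (univ : Set X), (corrAut E B hB).toEquiv z = z := by
  rintro ⟨u, v⟩ hz
  have hu : u ∉ B := by
    intro hu
    exact hz ⟨hu, mem_univ v⟩
  rw [corrAut_apply, retTime_eq_zero_of_not_mem hu]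
  rfl

theorem corrAut_in (E : SkewExt S) (hB : MeasurableSet B) :
    ∀ z ∈ B ×ˢ (univ : Set X), (corrAut E B hB).toEquiv z ∈ B ×ˢ (univ : Set X) := by
  intro z hz
  have h1 := corrAut_fst E B hB z
  constructor
  · rw [h1]; exact hz.1
  · exact mem_univ _

theorem perturb_close (E : SkewExt S) (hB : MeasurableSet B)
    (A₂ : ℕ → Set (X × X)) (hA₂m : ∀ i, MeasurableSet (A₂ i)) :
    halmos A₂ E.prod (perturb E B hB).prod ≤ 4 * (μ B).toReal := by
  set G := corrAut E B hB with hG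
  set F := perturb E B hB with hF
  have hBtop : μ B ≠ ⊤ := (lt_of_le_of_lt prob_le_one one_lt_top).ne
  have hterm : ∀ i : ℕ,
      (1 / 2 : ℝ) ^ i *
        (((μ.prod μ) (symmDiff (E.prod.toEquiv '' A₂ i) (F.prod.toEquiv '' A₂ i))).toReal +
         ((μ.prod μ) (symmDiff (E.prod.toEquiv.symm '' A₂ i)
            (F.prod.toEquiv.symm '' A₂ i))).toReal) ≤
      (1 / 2 : ℝ) ^ i * (2 * (μ B).toReal) := by
    intro i
    apply mul_le_mul_of_nonneg_left _ (by positivity)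
    have hBprod : (μ.prod μ) (B ×ˢ (univ : Set X)) = μ B := by
      rw [Measure.prod_prod, measure_univ, mul_one]
    have h1 : (μ.prod μ) (symmDiff (E.prod.toEquiv '' A₂ i) (F.prod.toEquiv '' A₂ i)) ≤ μ B := by
      rw [← hBprod]
      apply measure_mono
      have himg : F.prod.toEquiv '' A₂ i = G.toEquiv '' (E.prod.toEquiv '' A₂ i) := by
        show ((G.comp E.prod).toEquiv) '' A₂ i = _
        rw [show ⇑(G.comp E.prod).toEquiv = ⇑G.toEquiv ∘ ⇑E.prod.toEquiv from rfl,
          Set.image_comp]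
      rw [himg]
      exact symmDiff_image_subset G _ (corrAut_fixout E hB) (corrAut_in E hB) _
    have h2 : (μ.prod μ) (symmDiff (E.prod.toEquiv.symm '' A₂ i)
        (F.prod.toEquiv.symm '' A₂ i)) ≤ μ B := by
      have himg : F.prod.toEquiv.symm '' A₂ i =
          E.prod.toEquiv.symm '' (G.toEquiv.symm '' A₂ i) := by
        show ((G.comp E.prod).toEquiv.symm) '' A₂ i = _
        rw [show ⇑(G.comp E.prod).toEquiv.symm =
          ⇑E.prod.toEquiv.symm ∘ ⇑G.toEquiv.symm from rfl, Set.image_comp]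
      rw [himg, ← Set.image_symmDiff E.prod.toEquiv.symm.injective]
      have hmeas : MeasurableSet (symmDiff (A₂ i) (G.toEquiv.symm '' A₂ i)) := by
        have : MeasurableSet (G.toEquiv.symm '' A₂ i) := image_symm_measurableSet G (hA₂m i)
        exact MeasurableSet.symmDiff (hA₂m i) this
      rw [image_symm_measure E.prod hmeas]
      rw [← hBprod]
      apply measure_mono
      exact symmDiff_image_subset G.inv _
        (inv_fixout G _ (corrAut_fixout E hB) (corrAut_in E hB))
        (inv_in G _ (corrAut_fixout E hB) (corrAut_in E hB)) _
    have r1 : ((μ.prod μ) (symmDiff (E.prod.toEquiv '' A₂ i)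
        (F.prod.toEquiv '' A₂ i))).toReal ≤ (μ B).toReal := ENNReal.toReal_mono hBtop h1
    have r2 : ((μ.prod μ) (symmDiff (E.prod.toEquiv.symm '' A₂ i)
        (F.prod.toEquiv.symm '' A₂ i))).toReal ≤ (μ B).toReal := ENNReal.toReal_mono hBtop h2
    linarith
  calc halmos A₂ E.prod F.prod
      ≤ ∑' i : ℕ, (1 / 2 : ℝ) ^ i * (2 * (μ B).toReal) := by
        refine Summable.tsum_le_tsum hterm (halmos_summable A₂ E.prod F.prod) ?_
        exact (summable_geometric_of_lt_one (by norm_num) (by norm_num)).mul_right _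
    _ = 4 * (μ B).toReal := by
        rw [tsum_mul_right, tsum_geometric_of_lt_one (by norm_num) (by norm_num)]
        norm_num
        ring

theorem perturb_recStrong (E : SkewExt S) (hB : MeasurableSet B) (hBpos : μ B ≠ 0) :
    ∀ N : ℕ, ∃ n > N,
      0 < μ {x : X | cocycle S (perturb E B hB).T x n = Aut.id μ} := by
  intro N
  have hcons : Conservative (⇑S.toEquiv) μ := S.mp.conservative
  obtain ⟨n, hnN, hne⟩ :=
    hcons.exists_gt_measure_inter_ne_zero hB.nullMeasurableSet hBpos N
  refine ⟨n, hnN, ?_⟩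
  have hsub : B ∩ (⇑S.toEquiv)^[n] ⁻¹' B ⊆
      {x : X | cocycle S (perturb E B hB).T x n = Aut.id μ} := by
    rintro x ⟨hx1, hx2⟩
    exact perturb_cocycle_eq_id E hB n x (by omega) hx1 hx2
  exact lt_of_lt_of_le (pos_iff_ne_zero.2 hne) (measure_mono hsub)

end PerturbClose

end RecAux
namespace RecAux

open MeasureTheory Set ENNReal

section Cont

variable {Z : Type*} [MeasurableSpace Z] {ν : Measure Z} [IsProbabilityMeasure ν]

theorem image_symmDiff_measure (a : Aut Z ν) {U V : Set Z} (hU : MeasurableSet U)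
    (hV : MeasurableSet V) :
    ν (symmDiff (a.toEquiv '' U) (a.toEquiv '' V)) = ν (symmDiff U V) := by
  rw [← Set.image_symmDiff a.toEquiv.injective]
  exact image_measure a (hU.symmDiff hV)

theorem image_symm_symmDiff_measure (a : Aut Z ν) {U V : Set Z} (hU : MeasurableSet U)
    (hV : MeasurableSet V) :
    ν (symmDiff (a.toEquiv.symm '' U) (a.toEquiv.symm '' V)) = ν (symmDiff U V) :=
  image_symmDiff_measure a.inv hU hV

theorem cont1 (A₂ : ℕ → Set Z) (hA₂m : ∀ i, MeasurableSet (A₂ i))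
    (hA₂d : ∀ U : Set Z, MeasurableSet U → ∀ ε > (0:ℝ),
      ∃ i, ν (symmDiff U (A₂ i)) < ENNReal.ofReal ε)
    (a : Aut Z ν) (U : Set Z) (hU : MeasurableSet U) (γ : ℝ≥0∞) (hγ : γ ≠ 0) :
    ∃ r > (0:ℝ), ∀ b : Aut Z ν, halmos A₂ a b < r →
      ν (symmDiff (a.toEquiv '' U) (b.toEquiv '' U)) < γ ∧
      ν (symmDiff (a.toEquiv.symm '' U) (b.toEquiv.symm '' U)) < γ := by
  by_cases htop : γ = ⊤
  · exact ⟨1, one_pos, fun b _ => by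
      subst htop
      exact ⟨measure_lt_top ν _, measure_lt_top ν _⟩⟩
  set g3 : ℝ := γ.toReal / 3 with hg3
  have hg3pos : 0 < g3 := by
    have := ENNReal.toReal_pos hγ htop
    positivity
  obtain ⟨j, hj⟩ := hA₂d U hU g3 hg3pos
  refine ⟨g3 * (1/2)^j, by positivity, fun b hb => ?_⟩
  have hfin : ∀ s : Set Z, ν s ≠ ⊤ := fun s => (measure_lt_top ν s).ne
  have hmidf : ν (symmDiff (a.toEquiv '' A₂ j) (b.toEquiv '' A₂ j)) < ENNReal.ofReal g3 := by
    have h1 := le_halmos_fwd A₂ a b j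
    have h2 : (1/2:ℝ)^j * (ν (symmDiff (a.toEquiv '' A₂ j) (b.toEquiv '' A₂ j))).toReal <
        g3 * (1/2)^j := lt_of_le_of_lt h1 hb
    have h3 : (ν (symmDiff (a.toEquiv '' A₂ j) (b.toEquiv '' A₂ j))).toReal < g3 := by
      have hp : (0:ℝ) < (1/2)^j := by positivity
      nlinarith
    exact (ENNReal.lt_ofReal_iff_toReal_lt (hfin _)).2 h3
  have hmidb : ν (symmDiff (a.toEquiv.symm '' A₂ j) (b.toEquiv.symm '' A₂ j)) <
      ENNReal.ofReal g3 := by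
    have h1 := le_halmos_bwd A₂ a b j
    have h2 : (1/2:ℝ)^j *
        (ν (symmDiff (a.toEquiv.symm '' A₂ j) (b.toEquiv.symm '' A₂ j))).toReal <
        g3 * (1/2)^j := lt_of_le_of_lt h1 hb
    have h3 : (ν (symmDiff (a.toEquiv.symm '' A₂ j) (b.toEquiv.symm '' A₂ j))).toReal < g3 := by
      have hp : (0:ℝ) < (1/2)^j := by positivity
      nlinarith
    exact (ENNReal.lt_ofReal_iff_toReal_lt (hfin _)).2 h3
  have hsum : ENNReal.ofReal g3 + ENNReal.ofReal g3 + ENNReal.ofReal g3 = γ := by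
    rw [← ENNReal.ofReal_add hg3pos.le hg3pos.le, ← ENNReal.ofReal_add (by positivity) hg3pos.le]
    rw [show g3 + g3 + g3 = γ.toReal by rw [hg3]; ring]
    exact ENNReal.ofReal_toReal htop
  constructor
  · have t1 : ν (symmDiff (a.toEquiv '' U) (b.toEquiv '' U)) ≤
        ν (symmDiff (a.toEquiv '' U) (a.toEquiv '' A₂ j)) +
        ν (symmDiff (a.toEquiv '' A₂ j) (b.toEquiv '' A₂ j)) +
        ν (symmDiff (b.toEquiv '' A₂ j) (b.toEquiv '' U)) := by
      calc ν (symmDiff (a.toEquiv '' U) (b.toEquiv '' U))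
          ≤ ν (symmDiff (a.toEquiv '' U) (b.toEquiv '' A₂ j)) +
            ν (symmDiff (b.toEquiv '' A₂ j) (b.toEquiv '' U)) :=
            measure_symmDiff_triangle _ _ _
        _ ≤ _ := by
            gcongr
            exact measure_symmDiff_triangle _ _ _
    rw [image_symmDiff_measure a hU (hA₂m j), image_symmDiff_measure b (hA₂m j) hU] at t1
    rw [symmDiff_comm (A₂ j) U] at t1
    calc ν (symmDiff (a.toEquiv '' U) (b.toEquiv '' U))
        ≤ _ := t1
      _ < ENNReal.ofReal g3 + ENNReal.ofReal g3 + ENNReal.ofReal g3 := by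
          apply ENNReal.add_lt_add (ENNReal.add_lt_add hj hmidf) hj
      _ = γ := hsum
  · have t1 : ν (symmDiff (a.toEquiv.symm '' U) (b.toEquiv.symm '' U)) ≤
        ν (symmDiff (a.toEquiv.symm '' U) (a.toEquiv.symm '' A₂ j)) +
        ν (symmDiff (a.toEquiv.symm '' A₂ j) (b.toEquiv.symm '' A₂ j)) +
        ν (symmDiff (b.toEquiv.symm '' A₂ j) (b.toEquiv.symm '' U)) := by
      calc ν (symmDiff (a.toEquiv.symm '' U) (b.toEquiv.symm '' U))
          ≤ ν (symmDiff (a.toEquiv.symm '' U) (b.toEquiv.symm '' A₂ j)) +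
            ν (symmDiff (b.toEquiv.symm '' A₂ j) (b.toEquiv.symm '' U)) :=
            measure_symmDiff_triangle _ _ _
        _ ≤ _ := by
            gcongr
            exact measure_symmDiff_triangle _ _ _
    rw [image_symm_symmDiff_measure a hU (hA₂m j),
      image_symm_symmDiff_measure b (hA₂m j) hU] at t1
    rw [symmDiff_comm (A₂ j) U] at t1
    calc ν (symmDiff (a.toEquiv.symm '' U) (b.toEquiv.symm '' U))
        ≤ _ := t1
      _ < ENNReal.ofReal g3 + ENNReal.ofReal g3 + ENNReal.ofReal g3 := by
          apply ENNReal.add_lt_add (ENNReal.add_lt_add hj hmidb) hj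
      _ = γ := hsum

theorem iterate_image_measurableSet (a : Aut Z ν) (n : ℕ) {U : Set Z}
    (hU : MeasurableSet U) : MeasurableSet ((⇑a.toEquiv)^[n] '' U) := by
  have h : (⇑a.toEquiv)^[n] '' U = (autPow a n).toEquiv '' U := by
    rw [show ⇑(autPow a n).toEquiv = (⇑a.toEquiv)^[n] from funext (autPow_apply a n)]
  rw [h]
  exact image_measurableSet _ hU

theorem iterate_symm_image_measurableSet (a : Aut Z ν) (n : ℕ) {U : Set Z}
    (hU : MeasurableSet U) : MeasurableSet ((⇑a.toEquiv.symm)^[n] '' U) := by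
  have h : (⇑a.toEquiv.symm)^[n] '' U = (autPow a.inv n).toEquiv '' U := by
    rw [show ⇑(autPow a.inv n).toEquiv = (⇑a.toEquiv.symm)^[n] from funext (autPow_apply a.inv n)]
  rw [h]
  exact image_measurableSet _ hU

theorem contn (A₂ : ℕ → Set Z) (hA₂m : ∀ i, MeasurableSet (A₂ i))
    (hA₂d : ∀ U : Set Z, MeasurableSet U → ∀ ε > (0:ℝ),
      ∃ i, ν (symmDiff U (A₂ i)) < ENNReal.ofReal ε)
    (a : Aut Z ν) (n : ℕ) :
    ∀ (U : Set Z), MeasurableSet U → ∀ γ : ℝ≥0∞, γ ≠ 0 →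
    ∃ r > (0:ℝ), ∀ b : Aut Z ν, halmos A₂ a b < r →
      ν (symmDiff ((⇑a.toEquiv)^[n] '' U) ((⇑b.toEquiv)^[n] '' U)) < γ ∧
      ν (symmDiff ((⇑a.toEquiv.symm)^[n] '' U) ((⇑b.toEquiv.symm)^[n] '' U)) < γ := by
  induction n with
  | zero =>
    intro U hU γ hγ
    refine ⟨1, one_pos, fun b _ => ?_⟩
    simp only [Function.iterate_zero, Set.image_id]
    rw [symmDiff_self]
    have : ν (⊥ : Set Z) = 0 := by
      show ν ∅ = 0
      exact measure_empty
    rw [this]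
    exact ⟨pos_iff_ne_zero.2 hγ, pos_iff_ne_zero.2 hγ⟩
  | succ n IH =>
    intro U hU γ hγ
    have hγ2 : γ / 2 ≠ 0 := by simp [ENNReal.div_eq_zero_iff, hγ]
    -- forward pieces
    obtain ⟨r₁, hr₁, hc₁⟩ := cont1 A₂ hA₂m hA₂d a ((⇑a.toEquiv)^[n] '' U)
      (iterate_image_measurableSet a n hU) (γ / 2) hγ2
    obtain ⟨r₂, hr₂, hc₂⟩ := IH U hU (γ / 2) hγ2
    obtain ⟨r₃, hr₃, hc₃⟩ := IH (a.toEquiv.symm '' U) (image_symm_measurableSet a hU)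
      (γ / 2) hγ2
    obtain ⟨r₄, hr₄, hc₄⟩ := cont1 A₂ hA₂m hA₂d a U hU (γ / 2) hγ2
    refine ⟨min (min r₁ r₂) (min r₃ r₄), by positivity, fun b hb => ?_⟩
    have hb₁ : halmos A₂ a b < r₁ := lt_of_lt_of_le hb
      (le_trans (min_le_left _ _) (min_le_left _ _))
    have hb₂ : halmos A₂ a b < r₂ := lt_of_lt_of_le hb
      (le_trans (min_le_left _ _) (min_le_right _ _))
    have hb₃ : halmos A₂ a b < r₃ := lt_of_lt_of_le hb
      (le_trans (min_le_right _ _) (min_le_left _ _))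
    have hb₄ : halmos A₂ a b < r₄ := lt_of_lt_of_le hb
      (le_trans (min_le_right _ _) (min_le_right _ _))
    constructor
    · have e1 : (⇑a.toEquiv)^[n+1] '' U = a.toEquiv '' ((⇑a.toEquiv)^[n] '' U) := by
        rw [Function.iterate_succ', Set.image_comp]
      have e2 : (⇑b.toEquiv)^[n+1] '' U = b.toEquiv '' ((⇑b.toEquiv)^[n] '' U) := by
        rw [Function.iterate_succ', Set.image_comp]
      rw [e1, e2]
      calc ν (symmDiff (a.toEquiv '' ((⇑a.toEquiv)^[n] '' U))
              (b.toEquiv '' ((⇑b.toEquiv)^[n] '' U)))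
          ≤ ν (symmDiff (a.toEquiv '' ((⇑a.toEquiv)^[n] '' U))
              (b.toEquiv '' ((⇑a.toEquiv)^[n] '' U))) +
            ν (symmDiff (b.toEquiv '' ((⇑a.toEquiv)^[n] '' U))
              (b.toEquiv '' ((⇑b.toEquiv)^[n] '' U))) := measure_symmDiff_triangle _ _ _
        _ < γ / 2 + γ / 2 := by
            apply ENNReal.add_lt_add ((hc₁ b hb₁).1) ?_
            rw [image_symmDiff_measure b (iterate_image_measurableSet a n hU)
              (iterate_image_measurableSet b n hU)]
            exact (hc₂ b hb₂).1
        _ = γ := ENNReal.add_halves γ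
    · have e1 : (⇑a.toEquiv.symm)^[n+1] '' U =
          (⇑a.toEquiv.symm)^[n] '' (a.toEquiv.symm '' U) := by
        rw [Function.iterate_succ, Set.image_comp]
      have e2 : (⇑b.toEquiv.symm)^[n+1] '' U =
          (⇑b.toEquiv.symm)^[n] '' (b.toEquiv.symm '' U) := by
        rw [Function.iterate_succ, Set.image_comp]
      rw [e1, e2]
      calc ν (symmDiff ((⇑a.toEquiv.symm)^[n] '' (a.toEquiv.symm '' U))
              ((⇑b.toEquiv.symm)^[n] '' (b.toEquiv.symm '' U)))
          ≤ ν (symmDiff ((⇑a.toEquiv.symm)^[n] '' (a.toEquiv.symm '' U))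
              ((⇑b.toEquiv.symm)^[n] '' (a.toEquiv.symm '' U))) +
            ν (symmDiff ((⇑b.toEquiv.symm)^[n] '' (a.toEquiv.symm '' U))
              ((⇑b.toEquiv.symm)^[n] '' (b.toEquiv.symm '' U))) := measure_symmDiff_triangle _ _ _
        _ < γ / 2 + γ / 2 := by
            apply ENNReal.add_lt_add ((hc₃ b hb₃).2) ?_
            have himg : ∀ (W : Set Z), (⇑b.toEquiv.symm)^[n] '' W = (autPow b.inv n).toEquiv '' W :=
              fun W => by
                rw [show ⇑(autPow b.inv n).toEquiv = (⇑b.toEquiv.symm)^[n] from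
                  funext (autPow_apply b.inv n)]
            rw [himg, himg, image_symmDiff_measure (autPow b.inv n)
              (image_symm_measurableSet a hU) (image_symm_measurableSet b hU)]
            exact (hc₄ b hb₄).2
        _ = γ := ENNReal.add_halves γ

end Cont

end RecAux
namespace RecAux

open MeasureTheory Set ENNReal

theorem preimage_symmDiff {α β : Type*} (f : α → β) (P Q : Set β) :
    f ⁻¹' (symmDiff P Q) = symmDiff (f ⁻¹' P) (f ⁻¹' Q) := by
  ext z
  simp [Set.mem_symmDiff]

section Key

variable {X : Type*} [MeasurableSpace X] {μ : Measure X} [IsProbabilityMeasure μ] {S : Aut X μ}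

noncomputable def psiAut (E : SkewExt S) (n : ℕ) : Aut (X × X) (μ.prod μ) :=
  ((autPow (prodId S) n).inv).comp (autPow E.prod n)

theorem prodId_pow_symm_apply (n : ℕ) (z : X × X) :
    (autPow (prodId (μ := μ) S) n).toEquiv.symm z = ((⇑S.toEquiv.symm)^[n] z.1, z.2) := by
  rw [autPow_symm_apply]
  induction n generalizing z with
  | zero => rfl
  | succ n ih =>
    rw [Function.iterate_succ_apply, Function.iterate_succ_apply]
    have hstep : (prodId (μ := μ) S).toEquiv.symm z = (S.toEquiv.symm z.1, z.2) := rfl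
    rw [hstep, ih]

theorem psiAut_apply (E : SkewExt S) (n : ℕ) (x y : X) :
    (psiAut E n).toEquiv (x, y) = (x, (cocycle S E.T x n).toEquiv y) := by
  show (autPow (prodId S) n).inv.toEquiv ((autPow E.prod n).toEquiv (x, y)) = _
  have h1 : (autPow E.prod n).toEquiv (x, y) =
      ((⇑S.toEquiv)^[n] x, (cocycle S E.T x n).toEquiv y) := by
    rw [autPow_apply, prod_iterate]
  rw [h1]
  show (autPow (prodId S) n).toEquiv.symm _ = _
  rw [prodId_pow_symm_apply]
  have hbase : Function.LeftInverse ⇑S.toEquiv.symm ⇑S.toEquiv := S.toEquiv.symm_apply_apply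
  rw [hbase.iterate n]

theorem psiAut_symm_apply (E : SkewExt S) (n : ℕ) (x v : X) :
    (psiAut E n).toEquiv.symm (x, v) = (x, (cocycle S E.T x n).toEquiv.symm v) := by
  have := psiAut_apply E n x ((cocycle S E.T x n).toEquiv.symm v)
  rw [MeasurableEquiv.apply_symm_apply] at this
  rw [← this, MeasurableEquiv.symm_apply_apply]

theorem fiber_image (E : SkewExt S) (n : ℕ) (Ai : Set X) (x : X) :
    Prod.mk x ⁻¹' ((psiAut E n).toEquiv '' ((univ : Set X) ×ˢ Ai)) =
      (cocycle S E.T x n).toEquiv '' Ai := by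
  ext v
  simp only [mem_preimage, mem_image]
  constructor
  · rintro ⟨⟨p, y⟩, hpy, heq⟩
    rw [psiAut_apply] at heq
    injection heq with h1 h2
    subst h1
    exact ⟨y, hpy.2, h2⟩
  · rintro ⟨y, hy, hCy⟩
    exact ⟨(x, y), ⟨mem_univ x, hy⟩, by rw [psiAut_apply, hCy]⟩

theorem fiber_symm_image (E : SkewExt S) (n : ℕ) (Ai : Set X) (x : X) :
    Prod.mk x ⁻¹' ((psiAut E n).toEquiv.symm '' ((univ : Set X) ×ˢ Ai)) =
      (cocycle S E.T x n).toEquiv.symm '' Ai := by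
  ext v
  simp only [mem_preimage, mem_image]
  constructor
  · rintro ⟨⟨p, y⟩, hpy, heq⟩
    rw [psiAut_symm_apply] at heq
    injection heq with h1 h2
    subst h1
    exact ⟨y, hpy.2, h2⟩
  · rintro ⟨y, hy, hCy⟩
    exact ⟨(x, y), ⟨mem_univ x, hy⟩, by rw [psiAut_symm_apply, hCy]⟩

theorem lint_fiber (E F : SkewExt S) (n : ℕ) {Ai : Set X} (hAi : MeasurableSet Ai) :
    (μ.prod μ) (symmDiff ((psiAut F n).toEquiv '' ((univ : Set X) ×ˢ Ai))
        ((psiAut E n).toEquiv '' ((univ : Set X) ×ˢ Ai))) =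
      ∫⁻ x, μ (symmDiff ((cocycle S F.T x n).toEquiv '' Ai)
        ((cocycle S E.T x n).toEquiv '' Ai)) ∂μ := by
  have hV : MeasurableSet ((univ : Set X) ×ˢ Ai) := MeasurableSet.univ.prod hAi
  have hW : MeasurableSet (symmDiff ((psiAut F n).toEquiv '' ((univ : Set X) ×ˢ Ai))
      ((psiAut E n).toEquiv '' ((univ : Set X) ×ˢ Ai))) :=
    (image_measurableSet _ hV).symmDiff (image_measurableSet _ hV)
  rw [Measure.prod_apply hW]
  congr 1
  funext x
  rw [preimage_symmDiff, fiber_image, fiber_image]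

theorem lint_fiber_symm (E F : SkewExt S) (n : ℕ) {Ai : Set X} (hAi : MeasurableSet Ai) :
    (μ.prod μ) (symmDiff ((psiAut F n).toEquiv.symm '' ((univ : Set X) ×ˢ Ai))
        ((psiAut E n).toEquiv.symm '' ((univ : Set X) ×ˢ Ai))) =
      ∫⁻ x, μ (symmDiff ((cocycle S F.T x n).toEquiv.symm '' Ai)
        ((cocycle S E.T x n).toEquiv.symm '' Ai)) ∂μ := by
  have hV : MeasurableSet ((univ : Set X) ×ˢ Ai) := MeasurableSet.univ.prod hAi
  have hW : MeasurableSet (symmDiff ((psiAut F n).toEquiv.symm '' ((univ : Set X) ×ˢ Ai))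
      ((psiAut E n).toEquiv.symm '' ((univ : Set X) ×ˢ Ai))) :=
    (image_symm_measurableSet _ hV).symmDiff (image_symm_measurableSet _ hV)
  rw [Measure.prod_apply hW]
  congr 1
  funext x
  rw [preimage_symmDiff, fiber_symm_image, fiber_symm_image]

theorem markov_fiber {W : Set (X × X)} (hW : MeasurableSet W) {β : ℝ} (hβ : 0 < β) :
    μ {x | ENNReal.ofReal β ≤ μ (Prod.mk x ⁻¹' W)} ≤
      (μ.prod μ) W / ENNReal.ofReal β := by
  have hm : Measurable fun x => μ (Prod.mk x ⁻¹' W) := measurable_measure_prodMk_left hW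
  have hmk := mul_meas_ge_le_lintegral₀ (μ := μ) hm.aemeasurable (ENNReal.ofReal β)
  rw [← Measure.prod_apply hW] at hmk
  rw [ENNReal.le_div_iff_mul_le (Or.inl (by simp [ENNReal.ofReal_eq_zero]; linarith))
    (Or.inl ENNReal.ofReal_ne_top), mul_comm]
  exact hmk

/-- Reduction of the `Ψ`-image symmetric difference to the power images. -/
theorem psi_image_reduction (E F : SkewExt S) (n : ℕ) {V : Set (X × X)}
    (hV : MeasurableSet V) :
    (μ.prod μ) (symmDiff ((psiAut F n).toEquiv '' V) ((psiAut E n).toEquiv '' V)) =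
      (μ.prod μ) (symmDiff ((⇑F.prod.toEquiv)^[n] '' V) ((⇑E.prod.toEquiv)^[n] '' V)) := by
  set τ := (autPow (prodId (μ := μ) S) n).inv with hτ
  have hE : (psiAut E n).toEquiv '' V = τ.toEquiv '' ((⇑E.prod.toEquiv)^[n] '' V) := by
    show ⇑(τ.comp (autPow E.prod n)).toEquiv '' V = _
    rw [show ⇑(τ.comp (autPow E.prod n)).toEquiv =
      ⇑τ.toEquiv ∘ ⇑(autPow E.prod n).toEquiv from rfl, Set.image_comp,
      show ⇑(autPow E.prod n).toEquiv = (⇑E.prod.toEquiv)^[n] from funext (autPow_apply _ n)]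
  have hF : (psiAut F n).toEquiv '' V = τ.toEquiv '' ((⇑F.prod.toEquiv)^[n] '' V) := by
    show ⇑(τ.comp (autPow F.prod n)).toEquiv '' V = _
    rw [show ⇑(τ.comp (autPow F.prod n)).toEquiv =
      ⇑τ.toEquiv ∘ ⇑(autPow F.prod n).toEquiv from rfl, Set.image_comp,
      show ⇑(autPow F.prod n).toEquiv = (⇑F.prod.toEquiv)^[n] from funext (autPow_apply _ n)]
  rw [hE, hF]
  exact image_symmDiff_measure τ (iterate_image_measurableSet F.prod n hV)
    (iterate_image_measurableSet E.prod n hV)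

theorem psi_symm_image_reduction (E F : SkewExt S) (n : ℕ) {V : Set (X × X)}
    (hV : MeasurableSet V) :
    (μ.prod μ) (symmDiff ((psiAut F n).toEquiv.symm '' V) ((psiAut E n).toEquiv.symm '' V)) =
      (μ.prod μ) (symmDiff
        ((⇑F.prod.toEquiv.symm)^[n] '' ((autPow (prodId (μ := μ) S) n).toEquiv '' V))
        ((⇑E.prod.toEquiv.symm)^[n] '' ((autPow (prodId (μ := μ) S) n).toEquiv '' V))) := by
  have hE : (psiAut E n).toEquiv.symm '' V =
      (⇑E.prod.toEquiv.symm)^[n] '' ((autPow (prodId (μ := μ) S) n).toEquiv '' V) := by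
    show ⇑(((autPow (prodId S) n).inv).comp (autPow E.prod n)).toEquiv.symm '' V = _
    rw [show ⇑(((autPow (prodId (μ := μ) S) n).inv).comp (autPow E.prod n)).toEquiv.symm =
      ⇑(autPow E.prod n).toEquiv.symm ∘ ⇑(autPow (prodId (μ := μ) S) n).toEquiv from rfl,
      Set.image_comp,
      show ⇑(autPow E.prod n).toEquiv.symm = (⇑E.prod.toEquiv.symm)^[n] from
        funext (autPow_symm_apply _ n)]
  have hF : (psiAut F n).toEquiv.symm '' V =
      (⇑F.prod.toEquiv.symm)^[n] '' ((autPow (prodId (μ := μ) S) n).toEquiv '' V) := by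
    show ⇑(((autPow (prodId S) n).inv).comp (autPow F.prod n)).toEquiv.symm '' V = _
    rw [show ⇑(((autPow (prodId (μ := μ) S) n).inv).comp (autPow F.prod n)).toEquiv.symm =
      ⇑(autPow F.prod n).toEquiv.symm ∘ ⇑(autPow (prodId (μ := μ) S) n).toEquiv from rfl,
      Set.image_comp,
      show ⇑(autPow F.prod n).toEquiv.symm = (⇑F.prod.toEquiv.symm)^[n] from
        funext (autPow_symm_apply _ n)]
  rw [hE, hF]

end Key

end RecAux
namespace RecAux

open MeasureTheory Set ENNReal

theorem exists_min_pos (g : ℕ → ℝ) (hg : ∀ i, 0 < g i) : ∀ I : ℕ, ∃ r > (0:ℝ), ∀ i < I, r ≤ g i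
  | 0 => ⟨1, one_pos, fun i hi => absurd hi (by omega)⟩
  | (I+1) => by
    obtain ⟨r, hr, h⟩ := exists_min_pos g hg I
    refine ⟨min r (g I), lt_min hr (hg I), fun i hi => ?_⟩
    rcases Nat.lt_or_ge i I with h1 | h1
    · exact le_trans (min_le_left _ _) (h i h1)
    · have : i = I := by omega
      subst this
      exact min_le_right _ _

section KeyMain

variable {X : Type*} [MeasurableSpace X] {μ : Measure X} [IsProbabilityMeasure μ] {S : Aut X μ}

theorem keyLemma
    (A : ℕ → Set X) (hAm : ∀ i, MeasurableSet (A i))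
    (A₂ : ℕ → Set (X × X)) (hA₂m : ∀ i, MeasurableSet (A₂ i))
    (hA₂d : ∀ U : Set (X × X), MeasurableSet U → ∀ ε > (0:ℝ),
      ∃ i, (μ.prod μ) (symmDiff U (A₂ i)) < ENNReal.ofReal ε)
    (E : SkewExt S) (n : ℕ) {θ : ℝ} (hθ : 0 < θ) {c : ℝ≥0∞} (hc : c ≠ 0) :
    ∃ r > (0:ℝ), ∀ F : SkewExt S, halmos A₂ E.prod F.prod < r →
      μ {x | θ ≤ halmos A (cocycle S F.T x n) (cocycle S E.T x n)} < c := by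
  classical
  set c' := min c 1 with hc'
  have hc'0 : c' ≠ 0 := by
    simp only [hc', ne_eq, min_eq_iff]
    intro h
    rcases h with ⟨h, _⟩ | ⟨h, _⟩
    · exact hc h
    · exact one_ne_zero h
  have hc'top : c' ≠ ⊤ := (lt_of_le_of_lt (min_le_right _ _) one_lt_top).ne
  suffices h : ∃ r > (0:ℝ), ∀ F : SkewExt S, halmos A₂ E.prod F.prod < r →
      μ {x | θ ≤ halmos A (cocycle S F.T x n) (cocycle S E.T x n)} < c' by
    obtain ⟨r, hr, hh⟩ := h
    exact ⟨r, hr, fun F hF => lt_of_lt_of_le (hh F hF) (min_le_left _ _)⟩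
  obtain ⟨I₀, hI₀⟩ := exists_pow_lt_of_lt_one (show (0:ℝ) < θ/8 by linarith)
    (by norm_num : (1/2:ℝ) < 1)
  set I := I₀ + 1 with hI
  have hIpos : 0 < I := Nat.succ_pos _
  have hIR : (0:ℝ) < I := by exact_mod_cast hIpos
  have htail : 4 * (1/2:ℝ)^I ≤ θ/2 := by
    have h1 : (1/2:ℝ)^I ≤ (1/2)^I₀ :=
      pow_le_pow_of_le_one (by norm_num) (by norm_num) (by omega)
    nlinarith
  set β : ℝ := θ / (4 * I) with hβ
  have hβpos : 0 < β := by positivity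
  have hβ0 : ENNReal.ofReal β ≠ 0 := by simp [ENNReal.ofReal_eq_zero]; linarith
  set t : ℝ≥0∞ := c' / (4 * (I:ℝ≥0∞)) with ht
  have hI0' : ((I:ℝ≥0∞)) ≠ 0 := Nat.cast_ne_zero.2 (by omega)
  have hItop : ((I:ℝ≥0∞)) ≠ ⊤ := natCast_ne_top I
  have h4I0 : (4 * (I:ℝ≥0∞)) ≠ 0 := by
    simp [hI0']
  have h4Itop : (4 * (I:ℝ≥0∞)) ≠ ⊤ := by
    refine ENNReal.mul_ne_top (by norm_num) hItop
  have ht0 : t ≠ 0 := by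
    rw [ht, ne_eq, ENNReal.div_eq_zero_iff]
    push_neg
    exact ⟨hc'0, h4Itop⟩
  set γ : ℝ≥0∞ := ENNReal.ofReal β * t with hγdef
  have hγ0 : γ ≠ 0 := mul_ne_zero hβ0 ht0
  -- radii
  have hrf : ∀ i : ℕ, ∃ r > (0:ℝ), ∀ b : Aut (X × X) (μ.prod μ), halmos A₂ E.prod b < r →
      (μ.prod μ) (symmDiff ((⇑E.prod.toEquiv)^[n] '' ((univ : Set X) ×ˢ A i))
        ((⇑b.toEquiv)^[n] '' ((univ : Set X) ×ˢ A i))) < γ := by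
    intro i
    obtain ⟨r, hr, hcn⟩ := contn A₂ hA₂m hA₂d E.prod n ((univ : Set X) ×ˢ A i)
      (MeasurableSet.univ.prod (hAm i)) γ hγ0
    exact ⟨r, hr, fun b hb => (hcn b hb).1⟩
  have hrb : ∀ i : ℕ, ∃ r > (0:ℝ), ∀ b : Aut (X × X) (μ.prod μ), halmos A₂ E.prod b < r →
      (μ.prod μ) (symmDiff
        ((⇑E.prod.toEquiv.symm)^[n] ''
          ((autPow (prodId (μ := μ) S) n).toEquiv '' ((univ : Set X) ×ˢ A i)))
        ((⇑b.toEquiv.symm)^[n] ''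
          ((autPow (prodId (μ := μ) S) n).toEquiv '' ((univ : Set X) ×ˢ A i)))) < γ := by
    intro i
    obtain ⟨r, hr, hcn⟩ := contn A₂ hA₂m hA₂d E.prod n
      ((autPow (prodId (μ := μ) S) n).toEquiv '' ((univ : Set X) ×ˢ A i))
      (image_measurableSet _ (MeasurableSet.univ.prod (hAm i))) γ hγ0
    exact ⟨r, hr, fun b hb => (hcn b hb).2⟩
  choose rf hrfpos hrfspec using hrf
  choose rb hrbpos hrbspec using hrb
  obtain ⟨r, hrpos, hrle⟩ := exists_min_pos (fun i => min (rf i) (rb i))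
    (fun i => lt_min (hrfpos i) (hrbpos i)) I
  refine ⟨r, hrpos, fun F hF => ?_⟩
  have hFf : ∀ i < I, halmos A₂ E.prod F.prod < rf i :=
    fun i hi => lt_of_lt_of_le hF (le_trans (hrle i hi) (min_le_left _ _))
  have hFb : ∀ i < I, halmos A₂ E.prod F.prod < rb i :=
    fun i hi => lt_of_lt_of_le hF (le_trans (hrle i hi) (min_le_right _ _))
  set Bf : ℕ → Set X := fun i => {x | ENNReal.ofReal β ≤
    μ (symmDiff ((cocycle S F.T x n).toEquiv '' A i)
      ((cocycle S E.T x n).toEquiv '' A i))} with hBfdef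
  set Bb : ℕ → Set X := fun i => {x | ENNReal.ofReal β ≤
    μ (symmDiff ((cocycle S F.T x n).toEquiv.symm '' A i)
      ((cocycle S E.T x n).toEquiv.symm '' A i))} with hBbdef
  have hfin : ∀ s : Set X, μ s ≠ ⊤ := fun s => (measure_lt_top μ s).ne
  -- inclusion into the bad sets
  have hsub : {x | θ ≤ halmos A (cocycle S F.T x n) (cocycle S E.T x n)} ⊆
      ⋃ i ∈ Finset.range I, (Bf i ∪ Bb i) := by
    intro x hx
    rw [mem_setOf_eq] at hx
    by_contra hnot
    simp only [mem_iUnion, Finset.mem_range, not_exists] at hnot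
    have hsmall : ∀ i, i < I →
        (μ (symmDiff ((cocycle S F.T x n).toEquiv '' A i)
          ((cocycle S E.T x n).toEquiv '' A i))).toReal < β ∧
        (μ (symmDiff ((cocycle S F.T x n).toEquiv.symm '' A i)
          ((cocycle S E.T x n).toEquiv.symm '' A i))).toReal < β := by
      intro i hi
      have h1 : x ∉ Bf i ∪ Bb i := fun hmem => hnot i hi hmem
      rw [mem_union, not_or] at h1
      obtain ⟨ha, hb⟩ := h1
      rw [hBfdef, mem_setOf_eq, not_le] at ha
      rw [hBbdef, mem_setOf_eq, not_le] at hb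
      exact ⟨ENNReal.toReal_lt_of_lt_ofReal ha, ENNReal.toReal_lt_of_lt_ofReal hb⟩
    have hhead : (∑ i ∈ Finset.range I, (1/2:ℝ)^i *
        ((μ (symmDiff ((cocycle S F.T x n).toEquiv '' A i)
          ((cocycle S E.T x n).toEquiv '' A i))).toReal +
         (μ (symmDiff ((cocycle S F.T x n).toEquiv.symm '' A i)
          ((cocycle S E.T x n).toEquiv.symm '' A i))).toReal)) < θ/2 := by
      have hlt : ∀ i ∈ Finset.range I, (1/2:ℝ)^i *
          ((μ (symmDiff ((cocycle S F.T x n).toEquiv '' A i)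
            ((cocycle S E.T x n).toEquiv '' A i))).toReal +
           (μ (symmDiff ((cocycle S F.T x n).toEquiv.symm '' A i)
            ((cocycle S E.T x n).toEquiv.symm '' A i))).toReal) < 2 * β := by
        intro i hi
        rw [Finset.mem_range] at hi
        obtain ⟨h1, h2⟩ := hsmall i hi
        have hp1 : (1/2:ℝ)^i ≤ 1 := pow_le_one₀ (by norm_num) (by norm_num)
        have hnn : 0 ≤ (μ (symmDiff ((cocycle S F.T x n).toEquiv '' A i)
            ((cocycle S E.T x n).toEquiv '' A i))).toReal +
           (μ (symmDiff ((cocycle S F.T x n).toEquiv.symm '' A i)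
            ((cocycle S E.T x n).toEquiv.symm '' A i))).toReal :=
          add_nonneg ENNReal.toReal_nonneg ENNReal.toReal_nonneg
        nlinarith
      have := Finset.sum_lt_sum_of_nonempty
        (Finset.nonempty_range_iff.2 (by omega)) hlt
      rw [Finset.sum_const, Finset.card_range, nsmul_eq_mul] at this
      have harith : (I:ℝ) * (2 * β) = θ/2 := by
        rw [hβ]
        field_simp
        ring
      linarith
    have hht := halmos_head_tail A (cocycle S F.T x n) (cocycle S E.T x n) I
    linarith
  -- per-piece measure bounds
  have hBfle : ∀ i, i < I → μ (Bf i) ≤ t := by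
    intro i hi
    set Vi := (univ : Set X) ×ˢ A i with hVi
    have hVim : MeasurableSet Vi := MeasurableSet.univ.prod (hAm i)
    set Wi := symmDiff ((psiAut F n).toEquiv '' Vi) ((psiAut E n).toEquiv '' Vi) with hWi
    have hWim : MeasurableSet Wi :=
      (image_measurableSet _ hVim).symmDiff (image_measurableSet _ hVim)
    have hBfi : Bf i = {x | ENNReal.ofReal β ≤ μ (Prod.mk x ⁻¹' Wi)} := by
      ext x
      rw [hBfdef, mem_setOf_eq, mem_setOf_eq, hWi, preimage_symmDiff,
        fiber_image, fiber_image]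
    have hmk : μ (Bf i) ≤ (μ.prod μ) Wi / ENNReal.ofReal β := by
      rw [hBfi]
      exact markov_fiber hWim hβpos
    have hWlt : (μ.prod μ) Wi < γ := by
      rw [hWi, psi_image_reduction E F n hVim, symmDiff_comm]
      exact hrfspec i F.prod (hFf i hi)
    calc μ (Bf i) ≤ (μ.prod μ) Wi / ENNReal.ofReal β := hmk
      _ ≤ γ / ENNReal.ofReal β := ENNReal.div_le_div_right hWlt.le _
      _ = t := by
          rw [hγdef, mul_comm, mul_div_assoc,
            ENNReal.div_self hβ0 ENNReal.ofReal_ne_top, mul_one]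
  have hBble : ∀ i, i < I → μ (Bb i) ≤ t := by
    intro i hi
    set Vi := (univ : Set X) ×ˢ A i with hVi
    have hVim : MeasurableSet Vi := MeasurableSet.univ.prod (hAm i)
    set Wi := symmDiff ((psiAut F n).toEquiv.symm '' Vi) ((psiAut E n).toEquiv.symm '' Vi)
      with hWi
    have hWim : MeasurableSet Wi :=
      (image_symm_measurableSet _ hVim).symmDiff (image_symm_measurableSet _ hVim)
    have hBbi : Bb i = {x | ENNReal.ofReal β ≤ μ (Prod.mk x ⁻¹' Wi)} := by
      ext x
      rw [hBbdef, mem_setOf_eq, mem_setOf_eq, hWi, preimage_symmDiff,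
        fiber_symm_image, fiber_symm_image]
    have hmk : μ (Bb i) ≤ (μ.prod μ) Wi / ENNReal.ofReal β := by
      rw [hBbi]
      exact markov_fiber hWim hβpos
    have hWlt : (μ.prod μ) Wi < γ := by
      rw [hWi, psi_symm_image_reduction E F n hVim, symmDiff_comm]
      exact hrbspec i F.prod (hFb i hi)
    calc μ (Bb i) ≤ (μ.prod μ) Wi / ENNReal.ofReal β := hmk
      _ ≤ γ / ENNReal.ofReal β := ENNReal.div_le_div_right hWlt.le _
      _ = t := by
          rw [hγdef, mul_comm, mul_div_assoc,
            ENNReal.div_self hβ0 ENNReal.ofReal_ne_top, mul_one]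
  -- total
  have htotal : μ {x | θ ≤ halmos A (cocycle S F.T x n) (cocycle S E.T x n)} ≤
      ∑ i ∈ Finset.range I, (t + t) := by
    refine le_trans (measure_mono hsub) ?_
    refine le_trans (measure_biUnion_finset_le _ _) ?_
    refine Finset.sum_le_sum fun i hi => ?_
    rw [Finset.mem_range] at hi
    exact le_trans (measure_union_le _ _) (add_le_add (hBfle i hi) (hBble i hi))
  have harith : (∑ _i ∈ Finset.range I, (t + t)) < c' := by
    rw [Finset.sum_const, Finset.card_range, nsmul_eq_mul]
    have hstep : (I:ℝ≥0∞) * (t + t) = c' / 2 := by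
      rw [ht]
      rw [div_eq_mul_inv, div_eq_mul_inv]
      have h4 : (4 * (I:ℝ≥0∞))⁻¹ = 4⁻¹ * (I:ℝ≥0∞)⁻¹ :=
        ENNReal.mul_inv (Or.inl (by norm_num)) (Or.inl (by norm_num))
      rw [h4]
      have hIinv : (I:ℝ≥0∞) * ((I:ℝ≥0∞))⁻¹ = 1 := ENNReal.mul_inv_cancel hI0' hItop
      have h44 : (4:ℝ≥0∞)⁻¹ + 4⁻¹ = 2⁻¹ := by
        have h42 : (4:ℝ≥0∞) = 2 * 2 := by norm_num
        rw [h42, ENNReal.mul_inv (Or.inl (by norm_num)) (Or.inl (by norm_num))]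
        rw [← mul_add, ENNReal.inv_two_add_inv_two, mul_one]
      calc (I:ℝ≥0∞) * (c' * (4⁻¹ * (I:ℝ≥0∞)⁻¹) + c' * (4⁻¹ * (I:ℝ≥0∞)⁻¹))
          = (c' * (4⁻¹ + 4⁻¹)) * ((I:ℝ≥0∞) * (I:ℝ≥0∞)⁻¹) := by ring
        _ = c' * 2⁻¹ := by rw [hIinv, h44, mul_one]
    rw [hstep]
    exact ENNReal.half_lt_self hc'0 hc'top
  exact lt_of_le_of_lt htotal harith

end KeyMain

end RecAux

open RecAux in
/-- Theorem 1: if `S` is aperiodic, then `Rec(S)` contains a dense `G_δ` subset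
of `Ext(S)`; recurrence is a typical property of extensions of `S`. -/
theorem rec_contains_dense_Gdelta {X : Type*} [MeasurableSpace X] [StandardBorelSpace X]
    (μ : Measure X) [IsProbabilityMeasure μ] (S : Aut X μ)
    (hS : Aperiodic S)
    (A : ℕ → Set X) (hAm : ∀ i, MeasurableSet (A i))
    (hAd : ∀ B : Set X, MeasurableSet B → ∀ ε > (0 : ℝ),
      ∃ i, μ (symmDiff B (A i)) < ENNReal.ofReal ε)
    (A₂ : ℕ → Set (X × X)) (hA₂m : ∀ i, MeasurableSet (A₂ i))
    (hA₂d : ∀ B : Set (X × X), MeasurableSet B → ∀ ε > (0 : ℝ),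
      ∃ i, (μ.prod μ) (symmDiff B (A₂ i)) < ENNReal.ofReal ε) :
    ∃ D : Set (SkewExt S),
      D ⊆ {E : SkewExt S | ∀ m : ℕ, 1 ≤ m → ∀ N : ℕ, ∃ n > N,
        0 < μ {x : X | halmos A (cocycle S E.T x n) (Aut.id μ) < 1 / m}} ∧
      IsGdeltaWrt (fun E F : SkewExt S => halmos A₂ E.prod F.prod) D ∧
      IsDenseWrt (fun E F : SkewExt S => halmos A₂ E.prod F.prod) D := by
  classical
  set RS : Set (SkewExt S) :=
    {F | ∀ N : ℕ, ∃ n > N, 0 < μ {x | cocycle S F.T x n = Aut.id μ}} with hRS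
  have hradius : ∀ F ∈ RS, ∀ m N : ℕ, ∃ r > (0:ℝ), ∃ n > N,
      ∀ w : SkewExt S, halmos A₂ F.prod w.prod < r →
        0 < μ {x | halmos A (cocycle S w.T x n) (Aut.id μ) < 1/((m:ℝ)+1)} := by
    intro F hF m N
    obtain ⟨n, hn, hpos⟩ := hF N
    set W := {x | cocycle S F.T x n = Aut.id μ} with hW
    have hcne : μ W ≠ 0 := hpos.ne'
    obtain ⟨r, hr, hkey⟩ := keyLemma A hAm A₂ hA₂m hA₂d F n
      (show (0:ℝ) < 1/((m:ℝ)+1) by positivity) hcne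
    refine ⟨r, hr, n, hn, fun w hw => ?_⟩
    have hbad := hkey w hw
    set Bad := {x | 1/((m:ℝ)+1) ≤ halmos A (cocycle S w.T x n) (cocycle S F.T x n)} with hBad
    have hsub : W \ Bad ⊆ {x | halmos A (cocycle S w.T x n) (Aut.id μ) < 1/((m:ℝ)+1)} := by
      rintro x ⟨hxW, hxB⟩
      rw [hW, Set.mem_setOf_eq] at hxW
      rw [hBad, Set.mem_setOf_eq, not_le] at hxB
      rw [Set.mem_setOf_eq, ← hxW]
      exact hxB
    have hposdiff : 0 < μ (W \ Bad) := by
      by_contra h0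
      push_neg at h0
      have h0' : μ (W \ Bad) = 0 := le_antisymm h0 zero_le
      have hWle : μ W ≤ μ (W \ Bad) + μ Bad := by
        refine le_trans (measure_mono ?_) (measure_union_le _ _)
        intro x hx
        by_cases hxB : x ∈ Bad
        · exact Or.inr hxB
        · exact Or.inl ⟨hx, hxB⟩
      rw [h0', zero_add] at hWle
      exact absurd (lt_of_le_of_lt hWle hbad) (lt_irrefl _)
    exact lt_of_lt_of_le hposdiff (measure_mono hsub)
  choose! rad hradpos nwit hnwit hradspec using hradius
  set U : ℕ → Set (SkewExt S) := fun k =>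
    ⋃ F ∈ RS, {w | halmos A₂ F.prod w.prod < rad F (Nat.unpair k).1 (Nat.unpair k).2} with hU
  refine ⟨⋂ k, U k, ?_, ?_, ?_⟩
  · -- contained in Rec
    intro w hw
    intro m hm N
    have hk := Set.mem_iInter.1 hw (Nat.pair (m - 1) N)
    rw [hU] at hk
    simp only [Set.mem_iUnion, Nat.unpair_pair] at hk
    obtain ⟨F, hFRS, hFw⟩ := hk
    rw [Set.mem_setOf_eq] at hFw
    have hspec := hradspec F hFRS (m - 1) N w hFw
    have hcast : ((m - 1 : ℕ):ℝ) + 1 = (m:ℝ) := by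
      have h1 : (m - 1) + 1 = m := Nat.succ_pred_eq_of_pos hm
      exact_mod_cast congrArg (Nat.cast : ℕ → ℝ) h1
    rw [hcast] at hspec
    exact ⟨nwit F (m - 1) N, hnwit F hFRS (m - 1) N, hspec⟩
  · -- G_delta
    refine ⟨U, ?_, rfl⟩
    intro k z hz
    rw [hU] at hz
    simp only [Set.mem_iUnion] at hz
    obtain ⟨F, hFRS, hFz⟩ := hz
    rw [Set.mem_setOf_eq] at hFz
    refine ⟨rad F (Nat.unpair k).1 (Nat.unpair k).2 - halmos A₂ F.prod z.prod,
      by linarith, fun w hw => ?_⟩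
    rw [hU]
    simp only [Set.mem_iUnion]
    refine ⟨F, hFRS, ?_⟩
    rw [Set.mem_setOf_eq]
    have htri := halmos_triangle A₂ F.prod z.prod w.prod
    linarith
  · -- dense
    intro z ε hε
    have hNA : ∀ a : X, μ {a} = 0 := no_atoms_of_aperiodic hS
    have hne : (ENNReal.ofReal (ε/8)) ≠ 0 := by
      simp [ENNReal.ofReal_eq_zero]
      linarith
    obtain ⟨B, hBm, hBpos, hBsmall⟩ := exists_small_set hNA hne
    set F := perturb z B hBm with hFdef
    have hFRS : F ∈ RS := by
      rw [hRS]
      intro N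
      exact perturb_recStrong z hBm hBpos.ne' N
    have hclose : halmos A₂ z.prod F.prod < ε := by
      have h1 := perturb_close z hBm A₂ hA₂m
      have h2 : (μ B).toReal < ε/8 := ENNReal.toReal_lt_of_lt_ofReal hBsmall
      calc halmos A₂ z.prod F.prod ≤ 4 * (μ B).toReal := h1
        _ < ε := by linarith
    refine ⟨F, ?_, hclose⟩
    refine Set.mem_iInter.2 fun k => ?_
    rw [hU]
    simp only [Set.mem_iUnion]
    refine ⟨F, hFRS, ?_⟩
    rw [Set.mem_setOf_eq, halmos_self]
    exact hradpos F hFRS (Nat.unpair k).1 (Nat.unpair k).2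
end

section
/- Let S be aperiodic. Given a skew product R = (S, T_x), ε > 0 and natural N, let B be a Rokhlin base with B, SB, ..., S^{N-1}B disjoint and μ(⊔_{i<N} S^i B) > 1 - ε. Then there exists a μ⊗μ-preserving automorphism Φ of X × X such that Φ R^i z = (S × Id)^i Φ z for all z ∈ B × X and 0 ≤ i ≤ N-1, and consequently μ⊗μ({z : Φ^{-1}(S × Id)Φ z ≠ R z}) ≤ ε + 1/N. -/
open MeasureTheory Set

section RokhlinAux
open scoped Classical

namespace Aut

variable {Z : Type*} [MeasurableSpace Z] {ν : Measure Z}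

/-- `n`-fold composition power of an automorphism. -/
def pow (a : Aut Z ν) : ℕ → Aut Z ν
  | 0 => Aut.id ν
  | n + 1 => a.comp (pow a n)

lemma pow_apply (a : Aut Z ν) (n : ℕ) (z : Z) :
    (a.pow n).toEquiv z = a.toEquiv^[n] z := by
  induction n with
  | zero => rfl
  | succ n ih =>
    show a.toEquiv ((a.pow n).toEquiv z) = _
    rw [ih, Function.iterate_succ_apply']

lemma pow_symm_apply (a : Aut Z ν) (n : ℕ) (z : Z) :
    (a.pow n).toEquiv.symm z = a.toEquiv.symm^[n] z := by
  induction n generalizing z with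
  | zero => rfl
  | succ n ih =>
    show (a.pow n).toEquiv.symm (a.toEquiv.symm z) = _
    rw [ih, Function.iterate_succ_apply]

end Aut

/-- Glue finitely many maps along a family of sets (identity off the union). -/
noncomputable def rokGlue {Z : Type*} (D : ℕ → Set Z) (q : ℕ → Z → Z) : ℕ → Z → Z
  | 0 => fun z => z
  | n + 1 => (D n).piecewise (q n) (rokGlue D q n)

lemma rokGlue_of_mem {Z : Type*} {D : ℕ → Set Z} {q : ℕ → Z → Z} :
    ∀ {n : ℕ}, (∀ i j, i < n → j < n → i ≠ j → Disjoint (D i) (D j)) →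
      ∀ {i : ℕ}, i < n → ∀ {z : Z}, z ∈ D i → rokGlue D q n z = q i z := by
  intro n
  induction n with
  | zero => intro _ i hi; omega
  | succ m ih =>
    intro hd i hi z hz
    rcases Nat.lt_succ_iff_lt_or_eq.1 hi with h | h
    · have hzm : z ∉ D m := fun hzm =>
        (hd i m (by omega) (by omega) (by omega)).le_bot ⟨hz, hzm⟩
      rw [rokGlue, Set.piecewise_eq_of_notMem _ _ _ hzm]
      exact ih (fun i j hi hj hij => hd i j (by omega) (by omega) hij) h hz
    · subst h
      rw [rokGlue, Set.piecewise_eq_of_mem _ _ _ hz]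

lemma rokGlue_of_not_mem {Z : Type*} {D : ℕ → Set Z} {q : ℕ → Z → Z} :
    ∀ {n : ℕ} {z : Z}, (∀ i, i < n → z ∉ D i) → rokGlue D q n z = z := by
  intro n
  induction n with
  | zero => intro z _; rfl
  | succ m ih =>
    intro z hz
    rw [rokGlue, Set.piecewise_eq_of_notMem _ _ _ (hz m (by omega))]
    exact ih fun i hi => hz i (by omega)

lemma rokGlue_measurable {Z : Type*} [MeasurableSpace Z] {D : ℕ → Set Z} {q : ℕ → Z → Z}
    (hD : ∀ i, MeasurableSet (D i)) (hq : ∀ i, Measurable (q i)) (n : ℕ) :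
    Measurable (rokGlue D q n) := by
  induction n with
  | zero => exact measurable_id
  | succ m ih => exact Measurable.piecewise (hD m) (hq m) ih

end RokhlinAux

/-- Given a Rokhlin base `B` of height `N` for an aperiodic `S` and a skew product
`R` over `S`, there is a `μ⊗μ`-preserving `Φ` intertwining the towers of `R` and
`S × Id` over `B × X` and such that `μ⊗μ {z : Φ⁻¹(S × Id)Φ z ≠ R z} ≤ ε + 1/N`. -/
theorem rokhlin_tower_conjugation {X : Type*} [MeasurableSpace X] [StandardBorelSpace X]
    (μ : Measure X) [IsProbabilityMeasure μ] (S : Aut X μ)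
    (hS : Aperiodic S) (E : SkewExt S)
    (ε : ℝ) (hε : 0 < ε) (N : ℕ) (hN : 1 ≤ N)
    (B : Set X) (hBm : MeasurableSet B)
    (hBd : ∀ i j, i < N → j < N → i ≠ j →
      Disjoint (S.toEquiv^[i] '' B) (S.toEquiv^[j] '' B))
    (hBc : 1 - ENNReal.ofReal ε < μ (⋃ i < N, S.toEquiv^[i] '' B)) :
    ∃ Φ : Aut (X × X) (μ.prod μ),
      (∀ z ∈ B ×ˢ (univ : Set X), ∀ i < N,
        Φ.toEquiv ((E.prod.toEquiv)^[i] z) = ((prodId S).toEquiv)^[i] (Φ.toEquiv z)) ∧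
      (μ.prod μ) {z : X × X |
          Φ.toEquiv.symm ((prodId S).toEquiv (Φ.toEquiv z)) ≠ E.prod.toEquiv z}
        ≤ ENNReal.ofReal (ε + 1 / N) := by
  classical
  set ν := μ.prod μ with hνdef
  set R := E.prod with hRdef
  set P := prodId S with hPdef
  -- basic pointwise facts
  have hPapp : ∀ z : X × X, P.toEquiv z = (S.toEquiv z.1, z.2) := fun z => rfl
  have hPsapp : ∀ z : X × X, P.toEquiv.symm z = (S.toEquiv.symm z.1, z.2) := fun z => rfl
  have hRfst : ∀ z : X × X, (R.toEquiv z).1 = S.toEquiv z.1 := by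
    intro z; rw [E.spec]
  have hRsfst : ∀ z : X × X, (R.toEquiv.symm z).1 = S.toEquiv.symm z.1 := by
    intro z
    have h := hRfst (R.toEquiv.symm z)
    rw [R.toEquiv.apply_symm_apply] at h
    rw [h, S.toEquiv.symm_apply_apply]
  have hPfstn : ∀ (n : ℕ) (z : X × X), (P.toEquiv^[n] z).1 = S.toEquiv^[n] z.1 := by
    intro n
    induction n with
    | zero => intro z; rfl
    | succ n ih =>
      intro z
      rw [Function.iterate_succ_apply', Function.iterate_succ_apply', ← ih z]
      rfl
  have hRfstn : ∀ (n : ℕ) (z : X × X), (R.toEquiv^[n] z).1 = S.toEquiv^[n] z.1 := by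
    intro n
    induction n with
    | zero => intro z; rfl
    | succ n ih =>
      intro z
      rw [Function.iterate_succ_apply', Function.iterate_succ_apply', ← ih z, hRfst]
  have hRsfstn : ∀ (n : ℕ) (z : X × X),
      (R.toEquiv.symm^[n] z).1 = S.toEquiv.symm^[n] z.1 := by
    intro n
    induction n with
    | zero => intro z; rfl
    | succ n ih =>
      intro z
      rw [Function.iterate_succ_apply', Function.iterate_succ_apply', ← ih z, hRsfst]
  -- iterate inverses
  have hRinv : ∀ (n : ℕ) (z : X × X), R.toEquiv.symm^[n] (R.toEquiv^[n] z) = z :=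
    fun n => Function.LeftInverse.iterate R.toEquiv.symm_apply_apply n
  have hRinv' : ∀ (n : ℕ) (z : X × X), R.toEquiv^[n] (R.toEquiv.symm^[n] z) = z :=
    fun n => Function.LeftInverse.iterate R.toEquiv.apply_symm_apply n
  have hPinv' : ∀ (n : ℕ) (z : X × X), P.toEquiv.symm^[n] (P.toEquiv^[n] z) = z :=
    fun n => Function.LeftInverse.iterate P.toEquiv.symm_apply_apply n
  have hSinv : ∀ (n : ℕ) (x : X), S.toEquiv^[n] (S.toEquiv.symm^[n] x) = x :=
    fun n => Function.LeftInverse.iterate S.toEquiv.apply_symm_apply n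
  have hSinv' : ∀ (n : ℕ) (x : X), S.toEquiv.symm^[n] (S.toEquiv^[n] x) = x :=
    fun n => Function.LeftInverse.iterate S.toEquiv.symm_apply_apply n
  -- the tower levels
  set D : ℕ → Set (X × X) := fun i => (S.toEquiv^[i] '' B) ×ˢ (univ : Set X) with hDdef
  have hSiB : ∀ i, MeasurableSet (S.toEquiv^[i] '' B) := by
    intro i
    induction i with
    | zero => simpa using hBm
    | succ i ih =>
      rw [Function.iterate_succ', Set.image_comp]
      exact S.toEquiv.measurableEmbedding.measurableSet_image.2 ih
  have hDm : ∀ i, MeasurableSet (D i) := fun i => (hSiB i).prod MeasurableSet.univ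
  have hmemD : ∀ (i : ℕ) (z : X × X), z ∈ D i ↔ z.1 ∈ S.toEquiv^[i] '' B := by
    intro i z; simp [hDdef]
  have hDdisj : ∀ i j, i < N → j < N → i ≠ j → Disjoint (D i) (D j) := by
    intro i j hi hj hij
    rw [Set.disjoint_left]
    intro z hzi hzj
    exact (hBd i j hi hj hij).le_bot ⟨(hmemD i z).1 hzi, (hmemD j z).1 hzj⟩
  -- the conjugating maps on each level
  set Q : ℕ → Aut (X × X) ν := fun i => (P.pow i).comp ((R.pow i).inv) with hQdef
  have hQapp : ∀ (i : ℕ) (z : X × X),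
      (Q i).toEquiv z = P.toEquiv^[i] (R.toEquiv.symm^[i] z) := by
    intro i z
    show (P.pow i).toEquiv (((R.pow i).inv).toEquiv z) = _
    rw [Aut.pow_apply]
    congr 1
    exact (R.pow_symm_apply i z)
  have hQsapp : ∀ (i : ℕ) (z : X × X),
      (Q i).toEquiv.symm z = R.toEquiv^[i] (P.toEquiv.symm^[i] z) := by
    intro i z
    show ((R.pow i).inv).toEquiv.symm ((P.pow i).toEquiv.symm z) = _
    rw [Aut.pow_symm_apply]
    show (R.pow i).toEquiv _ = _
    rw [Aut.pow_apply]
  have hQfst : ∀ (i : ℕ) (z : X × X), ((Q i).toEquiv z).1 = z.1 := by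
    intro i z
    rw [hQapp, hPfstn, hRsfstn, hSinv]
  have hQsfst : ∀ (i : ℕ) (z : X × X), ((Q i).toEquiv.symm z).1 = z.1 := by
    intro i z
    have h := hQfst i ((Q i).toEquiv.symm z)
    rw [(Q i).toEquiv.apply_symm_apply] at h
    exact h.symm
  have hQD : ∀ (i : ℕ) (z : X × X), (Q i).toEquiv z ∈ D i ↔ z ∈ D i := by
    intro i z; rw [hmemD, hmemD, hQfst]
  have hQsD : ∀ (i : ℕ) (z : X × X), (Q i).toEquiv.symm z ∈ D i ↔ z ∈ D i := by
    intro i z; rw [hmemD, hmemD, hQsfst]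
  -- the glued maps
  set f : X × X → X × X := rokGlue D (fun i => ((Q i).toEquiv : X × X → X × X)) N with hfdef
  set g : X × X → X × X :=
    rokGlue D (fun i => ((Q i).toEquiv.symm : X × X → X × X)) N with hgdef
  have hfz : ∀ {i : ℕ}, i < N → ∀ {z : X × X}, z ∈ D i → f z = (Q i).toEquiv z :=
    fun {i} hi {z} hz => rokGlue_of_mem hDdisj hi hz
  have hgz : ∀ {i : ℕ}, i < N → ∀ {z : X × X}, z ∈ D i → g z = (Q i).toEquiv.symm z :=
    fun {i} hi {z} hz => rokGlue_of_mem hDdisj hi hz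
  have hfid : ∀ {z : X × X}, (∀ i, i < N → z ∉ D i) → f z = z :=
    fun {z} hz => rokGlue_of_not_mem hz
  have hgid : ∀ {z : X × X}, (∀ i, i < N → z ∉ D i) → g z = z :=
    fun {z} hz => rokGlue_of_not_mem hz
  have hgf : ∀ z : X × X, g (f z) = z := by
    intro z
    by_cases h : ∃ i, i < N ∧ z ∈ D i
    · obtain ⟨i, hi, hz⟩ := h
      rw [hfz hi hz, hgz hi ((hQD i z).2 hz), (Q i).toEquiv.symm_apply_apply]
    · push_neg at h
      rw [hfid h, hgid h]
  have hfg : ∀ z : X × X, f (g z) = z := by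
    intro z
    by_cases h : ∃ i, i < N ∧ z ∈ D i
    · obtain ⟨i, hi, hz⟩ := h
      rw [hgz hi hz, hfz hi ((hQsD i z).2 hz), (Q i).toEquiv.apply_symm_apply]
    · push_neg at h
      rw [hgid h, hfid h]
  have hmf : Measurable f :=
    rokGlue_measurable hDm (fun i => (Q i).toEquiv.measurable) N
  have hmg : Measurable g :=
    rokGlue_measurable hDm (fun i => (Q i).toEquiv.symm.measurable) N
  -- the tower
  set U : Set (X × X) := ⋃ i, ⋃ (_ : i < N), D i with hUdef
  have hUm : MeasurableSet U :=
    MeasurableSet.iUnion fun i => MeasurableSet.iUnion fun _ => hDm i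
  -- measure preservation
  have hpre : ∀ A : Set (X × X), MeasurableSet A → ν (f ⁻¹' A) = ν A := by
    intro A hA
    have hdecomp : f ⁻¹' A =
        (⋃ i ∈ Finset.range N, ((Q i).toEquiv ⁻¹' (A ∩ D i))) ∪ (A ∩ Uᶜ) := by
      ext z
      simp only [Set.mem_union, Set.mem_iUnion, Finset.mem_range, Set.mem_preimage,
        Set.mem_inter_iff, Set.mem_compl_iff, hUdef]
      constructor
      · intro hz
        by_cases h : ∃ i, i < N ∧ z ∈ D i
        · obtain ⟨i, hi, hzi⟩ := h
          left
          refine ⟨i, hi, ?_, (hQD i z).2 hzi⟩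
          rwa [← hfz hi hzi]
        · push_neg at h
          right
          refine ⟨by rwa [hfid h] at hz, ?_⟩
          simp only [Set.mem_iUnion, not_exists]
          exact h
      · rintro (⟨i, hi, hzA, hzD⟩ | ⟨hzA, hzU⟩)
        · have hzDi : z ∈ D i := (hQD i z).1 hzD
          show f z ∈ A
          rwa [hfz hi hzDi]
        · simp only [Set.mem_iUnion, not_exists] at hzU
          show f z ∈ A
          rwa [hfid hzU]
    have hsub : (⋃ i ∈ Finset.range N, ((Q i).toEquiv ⁻¹' (A ∩ D i))) ⊆ U := by
      intro z hz
      simp only [Set.mem_iUnion, Finset.mem_range] at hz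
      obtain ⟨i, hi, hz⟩ := hz
      exact Set.mem_iUnion.2 ⟨i, Set.mem_iUnion.2 ⟨hi, (hQD i z).1 hz.2⟩⟩
    have hdisj : Disjoint (⋃ i ∈ Finset.range N, ((Q i).toEquiv ⁻¹' (A ∩ D i))) (A ∩ Uᶜ) :=
      Disjoint.mono hsub (Set.inter_subset_right) disjoint_compl_right
    have hpd : (↑(Finset.range N) : Set ℕ).PairwiseDisjoint
        (fun i => ((Q i).toEquiv ⁻¹' (A ∩ D i))) := by
      intro i hi j hj hij
      simp only [Finset.coe_range, Set.mem_Iio] at hi hj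
      refine Disjoint.mono ?_ ?_ (hDdisj i j hi hj hij)
      · intro z hz; exact (hQD i z).1 hz.2
      · intro z hz; exact (hQD j z).1 hz.2
    have hpd2 : (↑(Finset.range N) : Set ℕ).PairwiseDisjoint (fun i => A ∩ D i) := by
      intro i hi j hj hij
      simp only [Finset.coe_range, Set.mem_Iio] at hi hj
      exact Disjoint.mono Set.inter_subset_right Set.inter_subset_right (hDdisj i j hi hj hij)
    rw [hdecomp, measure_union hdisj (hA.inter hUm.compl),
      measure_biUnion_finset hpd
        (fun i _ => (Q i).toEquiv.measurable (hA.inter (hDm i)))]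
    have hterm : ∀ i ∈ Finset.range N,
        ν ((Q i).toEquiv ⁻¹' (A ∩ D i)) = ν (A ∩ D i) := fun i _ =>
      (Q i).mp.measure_preimage ((hA.inter (hDm i)).nullMeasurableSet)
    rw [Finset.sum_congr rfl hterm,
      ← measure_biUnion_finset hpd2 (fun i _ => hA.inter (hDm i))]
    have hAU : (⋃ i ∈ Finset.range N, (A ∩ D i)) = A ∩ U := by
      ext z
      simp only [Set.mem_iUnion, Finset.mem_range, Set.mem_inter_iff, hUdef]
      tauto
    rw [hAU, ← Set.diff_eq, measure_inter_add_diff A hUm]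
  -- build the automorphism
  set e : (X × X) ≃ᵐ (X × X) :=
    { toEquiv := ⟨f, g, hgf, hfg⟩
      measurable_toFun := hmf
      measurable_invFun := hmg } with hedef
  have hecoe : ∀ z, e z = f z := fun z => rfl
  have hescoe : ∀ z, e.symm z = g z := fun z => rfl
  have hmf' : Measurable (⇑e) := hmf
  have hmp : MeasurePreserving (⇑e) ν ν := by
    refine ⟨hmf', Measure.ext fun A hA => ?_⟩
    rw [Measure.map_apply hmf' hA]
    exact hpre A hA
  refine ⟨⟨e, hmp⟩, ?_, ?_⟩
  · -- intertwining on the base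
    intro z hz i hi
    have hz0 : z ∈ D 0 := by
      rw [hmemD]
      simpa using hz.1
    have hzi : R.toEquiv^[i] z ∈ D i := by
      rw [hmemD, hRfstn]
      exact ⟨z.1, hz.1, rfl⟩
    show e (R.toEquiv^[i] z) = P.toEquiv^[i] (e z)
    rw [hecoe, hecoe, hfz hi hzi, hfz hN hz0, hQapp, hQapp, hRinv i z]
    simp
  · -- the error set is small
    have hbadsub : {z : X × X | e.symm (P.toEquiv (e z)) ≠ R.toEquiv z} ⊆
        Uᶜ ∪ D (N - 1) := by
      intro z hz
      by_contra hc
      simp only [Set.mem_union, Set.mem_compl_iff, not_or, not_not] at hc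
      obtain ⟨hzU, hzD⟩ := hc
      rw [hUdef] at hzU
      simp only [not_not, Set.mem_iUnion] at hzU
      obtain ⟨i, hi, hzi⟩ := hzU
      have hine : i ≠ N - 1 := fun h => hzD (h ▸ hzi)
      have hi1 : i + 1 < N := by omega
      apply hz
      show e.symm (P.toEquiv (e z)) = R.toEquiv z
      rw [hecoe, hescoe, hfz hi hzi, hQapp]
      have hPstep : P.toEquiv (P.toEquiv^[i] (R.toEquiv.symm^[i] z)) =
          P.toEquiv^[i + 1] (R.toEquiv.symm^[i] z) :=
        (Function.iterate_succ_apply' P.toEquiv (i) _).symm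
      rw [hPstep]
      have hb : S.toEquiv.symm^[i] z.1 ∈ B := by
        obtain ⟨b, hb, hbe⟩ := (hmemD i z).1 hzi
        rw [← hbe, hSinv']
        exact hb
      have hmem1 : P.toEquiv^[i + 1] (R.toEquiv.symm^[i] z) ∈ D (i + 1) := by
        rw [hmemD, hPfstn, hRsfstn]
        exact ⟨S.toEquiv.symm^[i] z.1, hb, rfl⟩
      rw [hgz hi1 hmem1, hQsapp, hPinv' (i + 1),
        Function.iterate_succ_apply' R.toEquiv i, hRinv' i z]
    calc ν {z : X × X | e.symm (P.toEquiv (e z)) ≠ R.toEquiv z}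
        ≤ ν (Uᶜ ∪ D (N - 1)) := measure_mono hbadsub
      _ ≤ ν Uᶜ + ν (D (N - 1)) := measure_union_le _ _
      _ ≤ ENNReal.ofReal ε + ENNReal.ofReal (1 / N) := by
          have himg : ∀ i, μ (S.toEquiv^[i] '' B) = μ B := by
            intro i
            induction i with
            | zero => simp
            | succ i ih =>
              rw [Function.iterate_succ', Set.image_comp, MeasurableEquiv.image_eq_preimage_symm,
                (S.mp.symm S.toEquiv).measure_preimage (hSiB i).nullMeasurableSet]
              exact ih
          have htow : μ (⋃ i, ⋃ (_ : i < N), S.toEquiv^[i] '' B) = N * μ B := by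
            have heq : (⋃ i, ⋃ (_ : i < N), S.toEquiv^[i] '' B) =
                ⋃ i ∈ Finset.range N, S.toEquiv^[i] '' B := by
              ext x; simp [Finset.mem_range]
            rw [heq, measure_biUnion_finset
              (fun i hi j hj hij => hBd i j (Finset.mem_range.1 hi) (Finset.mem_range.1 hj) hij)
              (fun i _ => hSiB i)]
            simp [himg, Finset.sum_const, mul_comm]
          have hμB : μ B ≤ (N : ENNReal)⁻¹ := by
            rw [ENNReal.le_inv_iff_mul_le, mul_comm, ← htow]
            exact (measure_mono (Set.subset_univ _)).trans_eq measure_univ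
          have hUeq : U = (⋃ i, ⋃ (_ : i < N), S.toEquiv^[i] '' B) ×ˢ (univ : Set X) := by
            ext z
            simp [hUdef, hDdef, Set.mem_iUnion]
          have hνU : ν U = μ (⋃ i, ⋃ (_ : i < N), S.toEquiv^[i] '' B) := by
            rw [hUeq, hνdef, Measure.prod_prod, measure_univ, mul_one]
          have hνUc : ν Uᶜ ≤ ENNReal.ofReal ε := by
            rw [measure_compl hUm (measure_ne_top ν U), hνU]
            have : (ν Set.univ : ENNReal) = 1 := measure_univ
            rw [this]
            refine tsub_le_iff_right.2 ?_
            calc (1 : ENNReal) ≤ (1 - ENNReal.ofReal ε) + ENNReal.ofReal ε := le_tsub_add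
              _ ≤ μ (⋃ i, ⋃ (_ : i < N), S.toEquiv^[i] '' B) + ENNReal.ofReal ε :=
                  add_le_add_left hBc.le _
              _ = ENNReal.ofReal ε + μ (⋃ i, ⋃ (_ : i < N), S.toEquiv^[i] '' B) := add_comm _ _
          have hνD : ν (D (N - 1)) ≤ ENNReal.ofReal (1 / N) := by
            have : ν (D (N - 1)) = μ B := by
              rw [hDdef, hνdef]
              simp only
              rw [Measure.prod_prod, measure_univ, mul_one, himg]
            rw [this, one_div, ENNReal.ofReal_inv_of_pos (by positivity), ENNReal.ofReal_natCast]
            exact hμB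
          exact add_le_add hνUc hνD
      _ = ENNReal.ofReal (ε + 1 / N) := by
          rw [ENNReal.ofReal_add hε.le (by positivity)]
end
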